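/- arXiv:2309.13493 — 8 statements merged into one kernel-verified Lean document; each statement's English description precedes it below -/
import Mathlib

section
/- For every integer k ≥ 2, every real λ > 0, and every integer n with 2 ≤ n ≤ k, one has h_k(n−1;λ) < h_k(n;λ); that is, the sequence h_k(1;λ), h_k(2;λ), …, h_k(k;λ) is strictly increasing. -/
/-- Scaled pmf of the Poisson distribution of order `k`:
`h_k(n;λ) = Σ λ^(n₁+⋯+n_k)/(n₁!⋯n_k!)`, summed over all `k`-tuples `(n₁,…,n_k)`
of nonnegative integers with `n₁ + 2n₂ + ⋯ + k·n_k = n`.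
(Each `n_i` is at most `n` whenever the constraint holds, so the range is exhaustive.) -/
noncomputable def poissonOrderH (k n : ℕ) (lam : ℝ) : ℝ :=
  ∑ t ∈ (Fintype.piFinset fun _ : Fin k => Finset.range (n + 1)) |>.filter
      (fun t => ∑ i : Fin k, ((i : ℕ) + 1) * t i = n),
    lam ^ (∑ i : Fin k, t i) / ∏ i : Fin k, (Nat.factorial (t i) : ℝ)

/-- Pmf of the Poisson distribution of order `k`: `f_k(n;λ) = e^{-kλ} h_k(n;λ)`. -/
noncomputable def poissonOrderPmf (k n : ℕ) (lam : ℝ) : ℝ :=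
  Real.exp (-(k * lam)) * poissonOrderH k n lam

/-- one plus the largest index with nonzero entry (0 if t = 0) -/
def pM {k : ℕ} (t : Fin k → ℕ) : ℕ :=
  Finset.univ.sup fun i : Fin k => if t i = 0 then 0 else (i : ℕ) + 1

lemma le_pM {k : ℕ} {t : Fin k → ℕ} {i : Fin k} (h : t i ≠ 0) : (i : ℕ) + 1 ≤ pM t := by
  have h2 : (if t i = 0 then 0 else (i : ℕ) + 1) ≤ pM t :=
    Finset.le_sup (f := fun i : Fin k => if t i = 0 then 0 else (i : ℕ) + 1)
      (Finset.mem_univ i)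
  rwa [if_neg h] at h2

lemma pM_zero_of_le {k : ℕ} {t : Fin k → ℕ} {i : Fin k} (h : pM t ≤ (i : ℕ)) : t i = 0 := by
  by_contra hne
  have := le_pM hne
  omega

lemma exists_pM {k : ℕ} (hk : 0 < k) {t : Fin k → ℕ} (h : 1 ≤ pM t) :
    ∃ i : Fin k, (i : ℕ) + 1 = pM t ∧ t i ≠ 0 := by
  have : Nonempty (Fin k) := ⟨⟨0, hk⟩⟩
  obtain ⟨i, -, hi⟩ := Finset.exists_mem_eq_sup (Finset.univ : Finset (Fin k))
    Finset.univ_nonempty (fun i : Fin k => if t i = 0 then 0 else (i : ℕ) + 1)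
  by_cases ht : t i = 0
  · rw [pM] at h
    rw [hi, if_pos ht] at h
    omega
  · refine ⟨i, ?_, ht⟩
    rw [pM, hi]
    simp [ht]

def pPhi {k : ℕ} (t : Fin k → ℕ) : Fin k → ℕ := fun j =>
  if (j : ℕ) + 1 = pM t then t j - 1 else if (j : ℕ) = pM t then 1 else t j

lemma sum_erase_erase {ι M : Type*} [Fintype ι] [DecidableEq ι] [AddCommMonoid M]
    (i j : ι) (hij : i ≠ j) (f : ι → M) :
    ∑ x, f x = f i + f j + ∑ x ∈ (Finset.univ.erase i).erase j, f x := by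
  rw [← Finset.add_sum_erase _ f (Finset.mem_univ i),
      ← Finset.add_sum_erase _ f (Finset.mem_erase.mpr ⟨hij.symm, Finset.mem_univ j⟩),
      ← add_assoc]

lemma prod_erase_erase {ι M : Type*} [Fintype ι] [DecidableEq ι] [CommMonoid M]
    (i j : ι) (hij : i ≠ j) (f : ι → M) :
    ∏ x, f x = f i * f j * ∏ x ∈ (Finset.univ.erase i).erase j, f x := by
  rw [← Finset.mul_prod_erase _ f (Finset.mem_univ i),
      ← Finset.mul_prod_erase _ f (Finset.mem_erase.mpr ⟨hij.symm, Finset.mem_univ j⟩),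
      ← mul_assoc]

/-- the missed tuple `(m+1, 0, ..., 0)` -/
def pS (k m : ℕ) : Fin k → ℕ := fun x => if (x : ℕ) = 0 then m + 1 else 0

lemma pS_sum (k m : ℕ) (hk : 0 < k) :
    ∑ i : Fin k, ((i : ℕ) + 1) * pS k m i = m + 1 := by
  rw [Finset.sum_eq_single_of_mem (⟨0, hk⟩ : Fin k) (Finset.mem_univ _)]
  · simp [pS]
  · intro b _ hb
    have hbv : (b : ℕ) ≠ 0 := fun h => hb (Fin.ext h)
    simp [pS, hbv]

lemma pS_pM (k m : ℕ) (hk : 0 < k) : pM (pS k m) = 1 := by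
  apply le_antisymm
  · apply Finset.sup_le
    intro i _
    by_cases h : (i : ℕ) = 0
    · simp [pS, h]
    · simp [pS, h]
  · simpa using le_pM (t := pS k m) (i := ⟨0, hk⟩) (by simp [pS])

lemma pPhi_spec {k m : ℕ} (hm : 1 ≤ m) (hmk : m + 1 ≤ k) {t : Fin k → ℕ}
    (hct : ∑ i : Fin k, ((i : ℕ) + 1) * t i = m) :
    (∑ i : Fin k, ((i : ℕ) + 1) * pPhi t i = m + 1) ∧
    (∑ i : Fin k, pPhi t i = ∑ i : Fin k, t i) ∧
    ((∏ i : Fin k, Nat.factorial (pPhi t i)) ≤ ∏ i : Fin k, Nat.factorial (t i)) ∧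
    pM (pPhi t) = pM t + 1 ∧ (∀ i, pPhi t i ≤ m) := by
  have hk0 : 0 < k := by omega
  have htle : ∀ i : Fin k, ((i : ℕ) + 1) * t i ≤ m := by
    intro i
    rw [← hct]
    exact Finset.single_le_sum (f := fun i : Fin k => ((i : ℕ) + 1) * t i)
      (fun j _ => Nat.zero_le _) (Finset.mem_univ i)
  have hpMle : pM t ≤ m := by
    apply Finset.sup_le
    intro i _
    by_cases h : t i = 0
    · simp [h]
    · have h1 := htle i
      have h2 : 1 ≤ t i := Nat.one_le_iff_ne_zero.mpr h
      simp only [h, if_neg, ite_false]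
      nlinarith
  have hpM1 : 1 ≤ pM t := by
    by_contra h
    have hz : ∀ i, t i = 0 := fun i => pM_zero_of_le (by omega)
    simp [hz] at hct
    omega
  obtain ⟨i₀, hi₀, ht₀⟩ := exists_pM hk0 hpM1
  have hpMk : pM t < k := by omega
  set j₀ : Fin k := ⟨pM t, hpMk⟩ with hj₀
  have hj₀v : (j₀ : ℕ) = pM t := rfl
  have hij : i₀ ≠ j₀ := by
    intro h
    rw [h] at hi₀
    simp [hj₀v] at hi₀
  have htj₀ : t j₀ = 0 := pM_zero_of_le (le_of_eq hj₀v.symm)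
  have hFi : pPhi t i₀ = t i₀ - 1 := by simp [pPhi, hi₀]
  have hFj : pPhi t j₀ = 1 := by
    simp only [pPhi, hj₀v]
    rw [if_neg (by omega)]
    simp
  have hFo : ∀ x : Fin k, x ≠ i₀ → x ≠ j₀ → pPhi t x = t x := by
    intro x hx1 hx2
    have h1 : (x : ℕ) + 1 ≠ pM t := fun h => hx1 (Fin.ext (by omega))
    have h2 : (x : ℕ) ≠ pM t := fun h => hx2 (Fin.ext (by rw [hj₀v]; omega))
    simp [pPhi, h1, h2]
  obtain ⟨c, hc⟩ : ∃ c, t i₀ = c + 1 := ⟨t i₀ - 1, by omega⟩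
  have hrest : ∀ (g : Fin k → ℕ → ℕ),
      ∑ x ∈ (Finset.univ.erase i₀).erase j₀, g x (pPhi t x)
        = ∑ x ∈ (Finset.univ.erase i₀).erase j₀, g x (t x) := by
    intro g
    refine Finset.sum_congr rfl fun x hx => ?_
    simp only [Finset.mem_erase] at hx
    rw [hFo x hx.2.1 hx.1]
  -- part 1: the weighted sum
  have part1 : ∑ i : Fin k, ((i : ℕ) + 1) * pPhi t i = m + 1 := by
    have e1 := sum_erase_erase i₀ j₀ hij (fun x : Fin k => ((x : ℕ) + 1) * pPhi t x)
    have e2 := sum_erase_erase i₀ j₀ hij (fun x : Fin k => ((x : ℕ) + 1) * t x)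
    rw [hct] at e2
    rw [hrest (fun x v => ((x : ℕ) + 1) * v)] at e1
    rw [e1, hFi, hFj, hc, hj₀v, hi₀]
    rw [hc, htj₀, hi₀, hj₀v] at e2
    have hd : pM t * (c + 1) = pM t * c + pM t := by ring
    rw [hd] at e2
    simp only [Nat.add_sub_cancel]
    omega
  -- part 2: sum of entries preserved
  have part2 : ∑ i : Fin k, pPhi t i = ∑ i : Fin k, t i := by
    have e1 := sum_erase_erase i₀ j₀ hij (pPhi t)
    have e2 := sum_erase_erase i₀ j₀ hij t
    rw [hrest (fun _ v => v)] at e1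
    rw [e1, e2, hFi, hFj, hc, htj₀]
    omega
  -- part 3: factorial product decreases
  have part3 : (∏ i : Fin k, Nat.factorial (pPhi t i)) ≤ ∏ i : Fin k, Nat.factorial (t i) := by
    have e1 := prod_erase_erase i₀ j₀ hij (fun x => Nat.factorial (pPhi t x))
    have e2 := prod_erase_erase i₀ j₀ hij (fun x => Nat.factorial (t x))
    have hrestp : ∏ x ∈ (Finset.univ.erase i₀).erase j₀, Nat.factorial (pPhi t x)
        = ∏ x ∈ (Finset.univ.erase i₀).erase j₀, Nat.factorial (t x) := by
      refine Finset.prod_congr rfl fun x hx => ?_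
      simp only [Finset.mem_erase] at hx
      rw [hFo x hx.2.1 hx.1]
    rw [e1, e2, hrestp, hFi, hFj, hc, htj₀]
    simp only [Nat.add_sub_cancel, Nat.factorial_one, Nat.factorial_zero, mul_one, one_mul]
    exact Nat.mul_le_mul_right _ (Nat.factorial_le (by omega))
  -- part 4: pM increases by one
  have part4 : pM (pPhi t) = pM t + 1 := by
    apply le_antisymm
    · apply Finset.sup_le
      intro i _
      by_cases h : pPhi t i = 0
      · simp [h]
      · simp only [h, ite_false]
        by_contra hgt
        push_neg at hgt
        have hi1 : i ≠ i₀ := by intro h'; rw [h'] at hgt; omega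
        have hi2 : i ≠ j₀ := by
          intro h'; rw [h'] at hgt; rw [hj₀v] at hgt; omega
        rw [hFo i hi1 hi2] at h
        exact h (pM_zero_of_le (by
          have : (i : ℕ) + 1 > pM t + 1 := hgt
          omega))
    · have : pPhi t j₀ ≠ 0 := by rw [hFj]; omega
      have := le_pM this
      rw [hj₀v] at this
      omega
  -- part 5: entries bounded
  have part5 : ∀ i, pPhi t i ≤ m := by
    intro i
    by_cases h1 : i = i₀
    · rw [h1, hFi]
      have ha := htle i₀
      have hb : t i₀ ≤ ((i₀ : ℕ) + 1) * t i₀ := Nat.le_mul_of_pos_left _ (by omega)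
      omega
    · by_cases h2 : i = j₀
      · rw [h2, hFj]; omega
      · rw [hFo i h1 h2]
        have ha := htle i
        have hb : t i ≤ ((i : ℕ) + 1) * t i := Nat.le_mul_of_pos_left _ (by omega)
        omega
  exact ⟨part1, part2, part3, part4, part5⟩

lemma pPhi_inj {k m : ℕ} (hm : 1 ≤ m) (hmk : m + 1 ≤ k) {t t' : Fin k → ℕ}
    (hct : ∑ i : Fin k, ((i : ℕ) + 1) * t i = m)
    (hct' : ∑ i : Fin k, ((i : ℕ) + 1) * t' i = m)
    (h : pPhi t = pPhi t') : t = t' := by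
  have hk0 : 0 < k := by omega
  obtain ⟨-, -, -, h4, -⟩ := pPhi_spec hm hmk hct
  obtain ⟨-, -, -, h4', -⟩ := pPhi_spec hm hmk hct'
  have hP : pM t = pM t' := by rw [← h] at h4'; omega
  have hpM1 : 1 ≤ pM t := by
    by_contra hcon
    have hz : ∀ i, t i = 0 := fun i => pM_zero_of_le (by omega)
    simp [hz] at hct
    omega
  obtain ⟨i₀, hi₀, ht₀⟩ := exists_pM hk0 hpM1
  obtain ⟨i₀', hi₀', ht₀'⟩ := exists_pM hk0 (hP ▸ hpM1)
  funext x
  have hx := congrFun h x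
  by_cases c1 : (x : ℕ) + 1 = pM t
  · have hxi : x = i₀ := Fin.ext (by omega)
    have hxi' : x = i₀' := Fin.ext (by rw [← hP] at hi₀'; omega)
    have h1 : t x ≠ 0 := hxi ▸ ht₀
    have h2 : t' x ≠ 0 := hxi' ▸ ht₀'
    simp only [pPhi, c1, ← hP, if_pos] at hx
    omega
  · by_cases c2 : (x : ℕ) = pM t
    · have e1 : t x = 0 := pM_zero_of_le (le_of_eq c2.symm)
      have e2 : t' x = 0 := pM_zero_of_le (le_of_eq (hP ▸ c2.symm : pM t' = (x:ℕ)))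
      rw [e1, e2]
    · simp only [pPhi, c1, c2, ← hP, if_neg, ite_false] at hx
      exact hx

lemma key (k m : ℕ) (lam : ℝ) (hlam : 0 < lam) (hm : 1 ≤ m) (hmk : m + 1 ≤ k) :
    poissonOrderH k m lam < poissonOrderH k (m + 1) lam := by
  have hk0 : 0 < k := by omega
  classical
  set w : (Fin k → ℕ) → ℝ :=
    fun t => lam ^ (∑ i : Fin k, t i) / ∏ i : Fin k, (Nat.factorial (t i) : ℝ) with hw
  have hwpos : ∀ t, 0 < w t := by
    intro t
    apply div_pos (pow_pos hlam _)
    apply Finset.prod_pos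
    intro i _
    exact_mod_cast (t i).factorial_pos
  set A := (Fintype.piFinset fun _ : Fin k => Finset.range (m + 1)).filter
      (fun t => ∑ i : Fin k, ((i : ℕ) + 1) * t i = m) with hAdef
  set B := (Fintype.piFinset fun _ : Fin k => Finset.range (m + 1 + 1)).filter
      (fun t => ∑ i : Fin k, ((i : ℕ) + 1) * t i = m + 1) with hBdef
  have hHm : poissonOrderH k m lam = ∑ t ∈ A, w t := rfl
  have hHm1 : poissonOrderH k (m + 1) lam = ∑ t ∈ B, w t := rfl
  have hctA : ∀ t ∈ A, ∑ i : Fin k, ((i : ℕ) + 1) * t i = m := by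
    intro t ht
    rw [hAdef] at ht
    exact (Finset.mem_filter.mp ht).2
  -- the missed element
  set s₀ : Fin k → ℕ := pS k m with hs₀
  have hs₀sum : ∑ i : Fin k, ((i : ℕ) + 1) * s₀ i = m + 1 := pS_sum k m hk0
  have hs₀B : s₀ ∈ B := by
    rw [hBdef, Finset.mem_filter]
    refine ⟨?_, hs₀sum⟩
    rw [Fintype.mem_piFinset]
    intro i
    rw [Finset.mem_range, hs₀]
    by_cases h : (i : ℕ) = 0 <;> simp [pS, h]
  have hpMs₀ : pM s₀ = 1 := pS_pM k m hk0
  -- main chain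
  have step1 : ∑ t ∈ A, w t ≤ ∑ t ∈ A, w (pPhi t) := by
    apply Finset.sum_le_sum
    intro t ht
    obtain ⟨-, h2, h3, -, -⟩ := pPhi_spec hm hmk (hctA t ht)
    rw [hw]
    dsimp only
    rw [h2]
    have hcast : (∏ i : Fin k, (Nat.factorial (pPhi t i) : ℝ))
        ≤ ∏ i : Fin k, (Nat.factorial (t i) : ℝ) := by
      exact_mod_cast h3
    have hpos : (0:ℝ) < ∏ i : Fin k, (Nat.factorial (pPhi t i) : ℝ) := by
      apply Finset.prod_pos
      intro i _
      exact_mod_cast (pPhi t i).factorial_pos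
    exact div_le_div_of_nonneg_left (le_of_lt (pow_pos hlam _)) hpos hcast
  have hinj : ∀ t ∈ A, ∀ t' ∈ A, pPhi t = pPhi t' → t = t' := by
    intro t ht t' ht' h
    exact pPhi_inj hm hmk (hctA t ht) (hctA t' ht') h
  have step2 : ∑ t ∈ A, w (pPhi t) = ∑ s ∈ A.image pPhi, w s :=
    (Finset.sum_image hinj).symm
  have step3 : A.image pPhi ⊆ B.erase s₀ := by
    intro s hs
    obtain ⟨t, ht, rfl⟩ := Finset.mem_image.mp hs
    obtain ⟨h1, -, -, h4, h5⟩ := pPhi_spec hm hmk (hctA t ht)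
    rw [Finset.mem_erase]
    constructor
    · intro hcon
      have hpM1 : 1 ≤ pM t := by
        by_contra hcon2
        have hz2 : ∀ i, t i = 0 := fun i => pM_zero_of_le (by omega)
        have := hctA t ht
        simp [hz2] at this
        omega
      have : pM (pPhi t) = 1 := by rw [hcon, hpMs₀]
      omega
    · rw [hBdef, Finset.mem_filter]
      refine ⟨?_, h1⟩
      rw [Fintype.mem_piFinset]
      intro i
      rw [Finset.mem_range]
      have := h5 i
      omega
  have step4 : ∑ s ∈ A.image pPhi, w s ≤ ∑ s ∈ B.erase s₀, w s :=
    Finset.sum_le_sum_of_subset_of_nonneg step3 (fun s _ _ => (hwpos s).le)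
  have step5 : ∑ s ∈ B.erase s₀, w s < ∑ s ∈ B, w s := by
    rw [← Finset.add_sum_erase B w hs₀B]
    linarith [hwpos s₀]
  rw [hHm, hHm1]
  calc ∑ t ∈ A, w t ≤ ∑ t ∈ A, w (pPhi t) := step1
    _ = ∑ s ∈ A.image pPhi, w s := step2
    _ ≤ ∑ s ∈ B.erase s₀, w s := step4
    _ < ∑ s ∈ B, w s := step5

theorem stmt_0 (k : ℕ) (hk : 2 ≤ k) (lam : ℝ) (hlam : 0 < lam)
    (n : ℕ) (hn1 : 2 ≤ n) (hn2 : n ≤ k) :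
    poissonOrderH k (n - 1) lam < poissonOrderH k n lam := by
  obtain ⟨m, rfl⟩ : ∃ m, n = m + 1 := ⟨n - 1, by omega⟩
  simpa using key k m lam hlam (by omega) (by omega)
end

section
/- For every integer k ≥ 2 and every real λ > 0, no integer m with 1 ≤ m ≤ k−1 is a mode of the Poisson distribution of order k with parameter λ; consequently every nonzero mode m satisfies m ≥ k. -/
/-- `m` is a mode of the Poisson distribution of order `k` with parameter `lam`. -/
def IsMode (k : ℕ) (lam : ℝ) (m : ℕ) : Prop :=
  ∀ n : ℕ, poissonOrderPmf k n lam ≤ poissonOrderPmf k m lam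

/-- Largest index with nonzero entry (0 if none). -/
def topIdx {k : ℕ} (t : Fin k → ℕ) : ℕ :=
  (Finset.univ.filter fun i => t i ≠ 0).sup Fin.val

/-- Move one unit of the top part of `t` up by `k - m`. -/
def phiAux (k m : ℕ) (t : Fin k → ℕ) : Fin k → ℕ := fun i =>
  if (i : ℕ) = topIdx t + (k - m) then 1
  else if (i : ℕ) = topIdx t then t i - 1 else t i

lemma phi_spec (k m : ℕ) (hm1 : 1 ≤ m) (hmk : m < k) (t : Fin k → ℕ)
    (hle : ∀ i, t i ≤ m) (hsum : ∑ i : Fin k, ((i : ℕ) + 1) * t i = m) :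
    (∀ i, phiAux k m t i ≤ k) ∧
    (topIdx t + (k - m) < k) ∧
    (∑ i : Fin k, ((i : ℕ) + 1) * phiAux k m t i = k) ∧
    (∑ i, phiAux k m t i = ∑ i, t i) ∧
    (∏ i, (phiAux k m t i).factorial ≤ ∏ i, (t i).factorial) ∧
    (topIdx (phiAux k m t) = topIdx t + (k - m)) ∧
    (t = fun i : Fin k => if (i : ℕ) = topIdx t + (k - m) then 0
        else if (i : ℕ) = topIdx t then phiAux k m t i + 1 else phiAux k m t i) := by
  classical
  have hk0 : 0 < k := lt_of_le_of_lt (Nat.zero_le m) hmk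
  have hne : ∃ i, t i ≠ 0 := by
    by_contra h
    push_neg at h
    have h0 : ∑ i : Fin k, ((i : ℕ) + 1) * t i = 0 :=
      Finset.sum_eq_zero fun i _ => by rw [h i, mul_zero]
    omega
  obtain ⟨i0, hi0⟩ := hne
  set F := Finset.univ.filter fun i : Fin k => t i ≠ 0 with hF
  have hFne : F.Nonempty := ⟨i0, by simp [hF, hi0]⟩
  obtain ⟨jm, hjmF, hjm⟩ := Finset.exists_mem_eq_sup F hFne Fin.val
  have hjm' : topIdx t = (jm : ℕ) := hjm
  have htjm : t jm ≠ 0 := (Finset.mem_filter.mp hjmF).2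
  have hmax : ∀ i, t i ≠ 0 → (i : ℕ) ≤ topIdx t := fun i hi =>
    Finset.le_sup (by simp [hF, hi])
  have hjmle : (jm : ℕ) + 1 ≤ m := by
    have h1 : ((jm : ℕ) + 1) * t jm ≤ m := by
      rw [← hsum]
      exact Finset.single_le_sum (f := fun i : Fin k => ((i : ℕ) + 1) * t i)
        (fun i _ => Nat.zero_le _) (Finset.mem_univ jm)
    have h2 : 1 ≤ t jm := Nat.one_le_iff_ne_zero.mpr htjm
    have h3 : ((jm : ℕ) + 1) * 1 ≤ ((jm : ℕ) + 1) * t jm := Nat.mul_le_mul_left _ h2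
    omega
  have hJk : topIdx t + (k - m) < k := by omega
  set j' : Fin k := ⟨topIdx t + (k - m), hJk⟩ with hj'
  have hj'val : (j' : ℕ) = topIdx t + (k - m) := rfl
  have htj' : t j' = 0 := by
    by_contra h
    have := hmax j' h
    rw [hj'val] at this
    omega
  have hjmj' : (jm : ℕ) ≠ (j' : ℕ) := by rw [hj'val, hjm']; omega
  have htjm1 : 1 ≤ t jm := Nat.one_le_iff_ne_zero.mpr htjm
  -- pointwise description
  have hpsi : ∀ i, phiAux k m t i + (if i = jm then 1 else 0)
      = t i + (if i = j' then 1 else 0) := by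
    intro i
    unfold phiAux
    by_cases h1 : (i : ℕ) = topIdx t + (k - m)
    · have hij' : i = j' := Fin.ext (by rw [hj'val]; exact h1)
      have hijm : i ≠ jm := by
        intro h; apply hjmj'; rw [← h, h1, hj'val]
      rw [if_pos h1, if_neg hijm, if_pos hij', hij', htj']
    · by_cases h2 : (i : ℕ) = topIdx t
      · have hijm : i = jm := Fin.ext (by rw [← hjm']; exact h2)
        have hij' : i ≠ j' := by
          intro h; apply h1; rw [h, hj'val]
        have hti : 1 ≤ t i := hijm ▸ htjm1
        rw [if_neg h1, if_pos h2, if_pos hijm, if_neg hij']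
        omega
      · have hijm : i ≠ jm := by intro h; apply h2; rw [h, ← hjm']
        have hij' : i ≠ j' := by intro h; apply h1; rw [h, hj'val]
        rw [if_neg h1, if_neg h2, if_neg hijm, if_neg hij']
  have hsumc : ∀ c : Fin k → ℕ,
      (∑ i, c i * phiAux k m t i) + c jm = (∑ i, c i * t i) + c j' := by
    intro c
    have h2 : ∑ i, c i * (phiAux k m t i + if i = jm then 1 else 0)
        = ∑ i, c i * (t i + if i = j' then 1 else 0) :=
      Finset.sum_congr rfl fun i _ => by rw [hpsi i]
    simpa [mul_add, Finset.sum_add_distrib, mul_ite, mul_one, mul_zero,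
      Finset.sum_ite_eq'] using h2
  refine ⟨?_, hJk, ?_, ?_, ?_, ?_, ?_⟩
  · intro i
    unfold phiAux
    split_ifs with h1 h2
    · omega
    · have := hle i; omega
    · have := hle i; omega
  · have h := hsumc fun i : Fin k => (i : ℕ) + 1
    rw [hsum] at h
    simp only [hj'val, hjm'] at h
    omega
  · have h := hsumc fun _ => 1
    simpa using h
  · apply Finset.prod_le_prod'
    intro i _
    unfold phiAux
    split_ifs with h1 h2
    · have hij' : i = j' := Fin.ext (by rw [hj'val]; exact h1)
      rw [hij', htj']
      decide
    · exact Nat.factorial_le (Nat.sub_le _ _)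
    · exact le_rfl
  · apply le_antisymm
    · apply Finset.sup_le
      intro i hi
      rw [Finset.mem_filter] at hi
      by_contra hgt
      push_neg at hgt
      apply hi.2
      unfold phiAux
      have h1 : (i : ℕ) ≠ topIdx t + (k - m) := by omega
      have h2 : (i : ℕ) ≠ topIdx t := by omega
      rw [if_neg h1, if_neg h2]
      by_contra hti
      have := hmax i hti
      omega
    · have hj'mem : j' ∈ Finset.univ.filter fun i => phiAux k m t i ≠ 0 := by
        simp only [Finset.mem_filter, Finset.mem_univ, true_and]
        unfold phiAux
        rw [if_pos hj'val]
        omega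
      have := Finset.le_sup (f := Fin.val) hj'mem
      rw [hj'val] at this
      exact this
  · funext i
    by_cases h1 : (i : ℕ) = topIdx t + (k - m)
    · rw [if_pos h1]
      have hij' : i = j' := Fin.ext (by rw [hj'val]; exact h1)
      rw [hij', htj']
    · rw [if_neg h1]
      by_cases h2 : (i : ℕ) = topIdx t
      · rw [if_pos h2]
        have hijm : i = jm := Fin.ext (by rw [← hjm']; exact h2)
        unfold phiAux
        rw [if_neg h1, if_pos h2, hijm]
        omega
      · rw [if_neg h2]
        unfold phiAux
        rw [if_neg h1, if_neg h2]
lemma key_lt (k m : ℕ) (hm1 : 1 ≤ m) (hmk : m < k) (lam : ℝ) (hlam : 0 < lam) :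
    poissonOrderH k m lam + lam ^ k / (Nat.factorial k : ℝ) ≤ poissonOrderH k k lam := by
  classical
  have hk0 : 0 < k := lt_of_le_of_lt (Nat.zero_le m) hmk
  set g : (Fin k → ℕ) → ℝ :=
    fun t => lam ^ (∑ i, t i) / ∏ i, ((t i).factorial : ℝ) with hg
  have hg0 : ∀ t, 0 ≤ g t := fun t =>
    div_nonneg (pow_nonneg hlam.le _) (Finset.prod_nonneg fun i _ => Nat.cast_nonneg _)
  set Sm := (Fintype.piFinset fun _ : Fin k => Finset.range (m + 1)) |>.filter
      (fun t => ∑ i : Fin k, ((i : ℕ) + 1) * t i = m) with hSm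
  set Sk := (Fintype.piFinset fun _ : Fin k => Finset.range (k + 1)) |>.filter
      (fun t => ∑ i : Fin k, ((i : ℕ) + 1) * t i = k) with hSk
  have hmem : ∀ t ∈ Sm, (∀ i, t i ≤ m) ∧ ∑ i : Fin k, ((i : ℕ) + 1) * t i = m := by
    intro t ht
    rw [hSm, Finset.mem_filter, Fintype.mem_piFinset] at ht
    exact ⟨fun i => Nat.lt_succ_iff.mp (Finset.mem_range.mp (ht.1 i)), ht.2⟩
  set e : Fin k → ℕ := fun i => if i = (⟨0, hk0⟩ : Fin k) then k else 0 with he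
  have hval : ∀ i : Fin k, e i = if i = (⟨0, hk0⟩ : Fin k) then k else 0 := fun _ => rfl
  have heSk : e ∈ Sk := by
    rw [hSk, Finset.mem_filter, Fintype.mem_piFinset]
    refine ⟨fun i => Finset.mem_range.mpr ?_, ?_⟩
    · rw [hval]; split_ifs <;> omega
    · rw [Fintype.sum_eq_single (⟨0, hk0⟩ : Fin k)
        (fun i hi => by rw [hval, if_neg hi, mul_zero])]
      rw [hval, if_pos rfl]
      simp
  have hge : g e = lam ^ k / (Nat.factorial k : ℝ) := by
    have h1 : ∑ i, e i = k := by
      rw [Fintype.sum_eq_single (⟨0, hk0⟩ : Fin k) (fun i hi => by rw [hval, if_neg hi])]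
      rw [hval, if_pos rfl]
    have h2 : ∏ i, ((e i).factorial : ℝ) = (Nat.factorial k : ℝ) := by
      rw [Fintype.prod_eq_single (⟨0, hk0⟩ : Fin k)
        (fun i hi => by rw [hval, if_neg hi]; norm_num)]
      rw [hval, if_pos rfl]
    have h3 : g e = lam ^ (∑ i, e i) / ∏ i, ((e i).factorial : ℝ) := rfl
    rw [h3, h1, h2]
  have hmain : ∀ t ∈ Sm, g t ≤ g (phiAux k m t) ∧ phiAux k m t ∈ Sk.erase e := by
    intro t ht
    obtain ⟨hle, hsum⟩ := hmem t ht
    obtain ⟨hb, hJk, hs, hs1, hp, _, _⟩ := phi_spec k m hm1 hmk t hle hsum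
    constructor
    · rw [hg]
      dsimp only
      rw [hs1]
      apply div_le_div_of_nonneg_left (pow_nonneg hlam.le _)
      · positivity
      · exact_mod_cast Nat.cast_le.mpr hp
    · rw [Finset.mem_erase]
      constructor
      · intro habs
        set j' : Fin k := ⟨topIdx t + (k - m), hJk⟩ with hj'
        have h1 : phiAux k m t j' = 1 := by
          unfold phiAux
          rw [if_pos rfl]
        have h2 : e j' = 0 := by
          rw [he]
          have : j' ≠ (⟨0, hk0⟩ : Fin k) := by
            intro h
            have := congrArg Fin.val h
            simp [hj'] at this
            omega
          simp [this]
        rw [habs, h2] at h1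
        exact one_ne_zero h1.symm
      · rw [hSk, Finset.mem_filter, Fintype.mem_piFinset]
        exact ⟨fun i => Finset.mem_range.mpr (Nat.lt_succ_iff.mpr (hb i)), hs⟩
  have hinj : Set.InjOn (phiAux k m) Sm := by
    intro t ht u hu hphi
    obtain ⟨hlet, hsumt⟩ := hmem t ht
    obtain ⟨hleu, hsumu⟩ := hmem u hu
    obtain ⟨_, _, _, _, _, htopt, hrect⟩ := phi_spec k m hm1 hmk t hlet hsumt
    obtain ⟨_, _, _, _, _, htopu, hrecu⟩ := phi_spec k m hm1 hmk u hleu hsumu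
    have htop : topIdx t = topIdx u := by
      have : topIdx (phiAux k m t) = topIdx (phiAux k m u) := by rw [hphi]
      rw [htopt, htopu] at this
      omega
    rw [hrect, hrecu, htop, hphi]
  calc poissonOrderH k m lam + lam ^ k / (Nat.factorial k : ℝ)
      = (∑ t ∈ Sm, g t) + g e := by rw [poissonOrderH, hge]
    _ ≤ (∑ t ∈ Sm, g (phiAux k m t)) + g e := by
        have := Finset.sum_le_sum (fun t ht => (hmain t ht).1)
        linarith
    _ = (∑ t ∈ Sm.image (phiAux k m), g t) + g e := by
        rw [Finset.sum_image (fun t ht u hu h => hinj ht hu h)]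
    _ ≤ (∑ t ∈ Sk.erase e, g t) + g e := by
        have hsub : Sm.image (phiAux k m) ⊆ Sk.erase e := by
          intro x hx
          obtain ⟨t, ht, rfl⟩ := Finset.mem_image.mp hx
          exact (hmain t ht).2
        have := Finset.sum_le_sum_of_subset_of_nonneg hsub (fun x _ _ => hg0 x)
        linarith
    _ = ∑ t ∈ Sk, g t := Finset.sum_erase_add Sk g heSk
    _ = poissonOrderH k k lam := rfl

theorem stmt_1 (k : ℕ) (hk : 2 ≤ k) (lam : ℝ) (hlam : 0 < lam) :
    (∀ m : ℕ, 1 ≤ m → m ≤ k - 1 → ¬ IsMode k lam m) ∧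
    (∀ m : ℕ, IsMode k lam m → m ≠ 0 → k ≤ m) := by
  have hmain : ∀ m : ℕ, 1 ≤ m → m ≤ k - 1 → ¬ IsMode k lam m := by
    intro m hm1 hm2 hmode
    have hmk : m < k := by omega
    have hkey := key_lt k m hm1 hmk lam hlam
    have hmode' := hmode k
    rw [poissonOrderPmf, poissonOrderPmf] at hmode'
    have hexp : (0 : ℝ) < Real.exp (-(k * lam)) := Real.exp_pos _
    have hhk : poissonOrderH k k lam ≤ poissonOrderH k m lam :=
      le_of_mul_le_mul_left hmode' hexp
    have hpos : (0 : ℝ) < lam ^ k / (Nat.factorial k : ℝ) := by positivity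
    linarith
  refine ⟨hmain, fun m hmode hm0 => ?_⟩
  by_contra h
  push_neg at h
  exact hmain m (by omega) (by omega) hmode
end

section
/- For every integer k ≥ 2 and every real λ > 0 such that h_k(k;λ) ≤ 1, one has h_k(k;λ) > h_k(k+1;λ). -/
open Finset

namespace PoiAux

variable {k : ℕ}

def A (k n : ℕ) : Finset (Fin k → ℕ) :=
  (Fintype.piFinset fun _ : Fin k => Finset.range (n + 1)).filter
    (fun t => ∑ i : Fin k, ((i : ℕ) + 1) * t i = n)

noncomputable def w (k : ℕ) (lam : ℝ) (t : Fin k → ℕ) : ℝ :=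
  lam ^ (∑ i, t i) / ∏ i, (Nat.factorial (t i) : ℝ)

lemma hA (k n : ℕ) (lam : ℝ) : poissonOrderH k n lam = ∑ t ∈ A k n, w k lam t := rfl

lemma mem_A {k n : ℕ} {t : Fin k → ℕ} :
    t ∈ A k n ↔ ∑ i : Fin k, ((i : ℕ) + 1) * t i = n := by
  constructor
  · intro ht; exact (Finset.mem_filter.mp ht).2
  · intro ht
    refine Finset.mem_filter.mpr ⟨?_, ht⟩
    refine Fintype.mem_piFinset.mpr fun i => ?_
    rw [Finset.mem_range, Nat.lt_succ_iff, ← ht]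
    calc t i ≤ ((i : ℕ) + 1) * t i := Nat.le_mul_of_pos_left _ (Nat.succ_pos _)
      _ ≤ _ := Finset.single_le_sum (f := fun j : Fin k => ((j : ℕ) + 1) * t j)
          (fun j _ => Nat.zero_le _) (Finset.mem_univ i)

lemma w_pos {lam : ℝ} (hlam : 0 < lam) (t : Fin k → ℕ) : 0 < w k lam t := by
  apply div_pos (pow_pos hlam _)
  exact Finset.prod_pos fun i _ => by exact_mod_cast (Nat.factorial_pos _)

lemma w_single {n : ℕ} {lam : ℝ} (j : Fin k) :
    w k lam (Pi.single j n) = lam ^ n / n.factorial := by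
  unfold w
  have h1 : (∑ i, (Pi.single j n : Fin k → ℕ) i) = n := by simp
  have h2 : (∏ i, (((Pi.single j n : Fin k → ℕ) i).factorial : ℝ)) = n.factorial := by
    rw [Finset.prod_eq_single j (fun b _ hb => by simp [Pi.single_eq_of_ne hb])
      (fun h => absurd (Finset.mem_univ j) h)]
    simp
  rw [h1, h2]

lemma sum_update {M : Type*} [AddCommMonoid M] (g : Fin k → ℕ → M) (t : Fin k → ℕ)
    (i : Fin k) (b : ℕ) :
    ∑ j, g j (Function.update t i b j) = g i b + ∑ j ∈ Finset.univ.erase i, g j (t j) := by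
  rw [← Finset.add_sum_erase _ _ (Finset.mem_univ i), Function.update_self]
  congr 1
  exact Finset.sum_congr rfl fun j hj => by
    rw [Function.update_of_ne (Finset.mem_erase.mp hj).1]

lemma sum_plain {M : Type*} [AddCommMonoid M] (g : Fin k → ℕ → M) (t : Fin k → ℕ) (i : Fin k) :
    ∑ j, g j (t j) = g i (t i) + ∑ j ∈ Finset.univ.erase i, g j (t j) :=
  (Finset.add_sum_erase _ _ (Finset.mem_univ i)).symm

lemma prod_update {M : Type*} [CommMonoid M] (g : Fin k → ℕ → M) (t : Fin k → ℕ)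
    (i : Fin k) (b : ℕ) :
    ∏ j, g j (Function.update t i b j) = g i b * ∏ j ∈ Finset.univ.erase i, g j (t j) := by
  rw [← Finset.mul_prod_erase _ _ (Finset.mem_univ i), Function.update_self]
  congr 1
  exact Finset.prod_congr rfl fun j hj => by
    rw [Function.update_of_ne (Finset.mem_erase.mp hj).1]

lemma prod_plain {M : Type*} [CommMonoid M] (g : Fin k → ℕ → M) (t : Fin k → ℕ) (i : Fin k) :
    ∏ j, g j (t j) = g i (t i) * ∏ j ∈ Finset.univ.erase i, g j (t j) :=
  (Finset.mul_prod_erase _ _ (Finset.mem_univ i)).symm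

lemma key (lam : ℝ) (n : ℕ) (i : Fin k) :
    ∑ t ∈ A k n, (t i : ℝ) * w k lam t =
      if (i : ℕ) + 1 ≤ n then lam * ∑ s ∈ A k (n - ((i : ℕ) + 1)), w k lam s else 0 := by
  by_cases hin : (i : ℕ) + 1 ≤ n
  · rw [if_pos hin]
    rw [← Finset.sum_filter_add_sum_filter_not (A k n) (fun t => t i ≠ 0)]
    have hz : ∑ t ∈ (A k n).filter (fun t => ¬ t i ≠ 0), (t i : ℝ) * w k lam t = 0 := by
      apply Finset.sum_eq_zero; intro t ht
      have h0 : t i = 0 := not_not.mp (Finset.mem_filter.mp ht).2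
      rw [h0]; simp
    rw [hz, add_zero, Finset.mul_sum]
    refine Finset.sum_nbij' (fun t => Function.update t i (t i - 1))
      (fun s => Function.update s i (s i + 1)) ?_ ?_ ?_ ?_ ?_
    · -- forward membership
      intro t ht
      obtain ⟨htA, h0⟩ := Finset.mem_filter.mp ht
      obtain ⟨a, ha⟩ := Nat.exists_eq_succ_of_ne_zero h0
      have hsum := mem_A.mp htA
      rw [sum_plain (fun j m => ((j : ℕ) + 1) * m) t i, ha] at hsum
      refine mem_A.mpr ?_
      rw [sum_update (fun j m => ((j : ℕ) + 1) * m) t i, ha]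
      simp only [Nat.succ_sub_one]
      rw [Nat.mul_succ] at hsum
      generalize ((i : ℕ) + 1) * a = x at hsum ⊢
      omega
    · -- backward membership
      intro s hs
      have hsum := mem_A.mp hs
      rw [sum_plain (fun j m => ((j : ℕ) + 1) * m) s i] at hsum
      refine Finset.mem_filter.mpr ⟨mem_A.mpr ?_, by simp⟩
      rw [sum_update (fun j m => ((j : ℕ) + 1) * m) s i, Nat.mul_succ]
      generalize ((i : ℕ) + 1) * s i = x at hsum ⊢
      omega
    · intro t ht
      have h0 : t i ≠ 0 := (Finset.mem_filter.mp ht).2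
      funext j
      rcases eq_or_ne j i with rfl | hj
      · simp [Function.update_self]; omega
      · simp [Function.update_of_ne hj]
    · intro s hs
      funext j
      rcases eq_or_ne j i with rfl | hj
      · simp [Function.update_self]
      · simp [Function.update_of_ne hj]
    · -- weights
      intro t ht
      obtain ⟨htA, h0⟩ := Finset.mem_filter.mp ht
      obtain ⟨a, ha⟩ := Nat.exists_eq_succ_of_ne_zero h0
      unfold w
      rw [sum_update (fun _ m => m) t i, sum_plain (fun _ m => m) t i,
        prod_update (fun _ m => ((m.factorial : ℝ))) t i,
        prod_plain (fun _ m => ((m.factorial : ℝ))) t i, ha]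
      set R := ∑ j ∈ Finset.univ.erase i, t j with hR
      set P := ∏ j ∈ Finset.univ.erase i, ((t j).factorial : ℝ) with hP
      have hPne : P ≠ 0 := by
        rw [hP]
        exact Finset.prod_ne_zero_iff.mpr fun j _ => by
          exact_mod_cast (Nat.factorial_pos _).ne'
      have hfa : ((a + 1).factorial : ℝ) = (a + 1) * a.factorial := by
        rw [Nat.factorial_succ]; push_cast; ring
    -- goal: ((a+1 : ℕ) : ℝ) * (lam ^ (a+1+R) / ((a+1)! * P)) = lam * (lam ^ (a+1-1+R) / ((a+1-1)! * P))
      simp only [Nat.succ_sub_one]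
      rw [hfa, show a + 1 + R = (a + R) + 1 from by omega, pow_succ]
      have hfane : (a.factorial : ℝ) ≠ 0 := by exact_mod_cast (Nat.factorial_pos _).ne'
      have ha1 : ((a : ℝ) + 1) ≠ 0 := by positivity
      push_cast
      field_simp
  · rw [if_neg hin]
    apply Finset.sum_eq_zero
    intro t ht
    have h0 : t i = 0 := by
      by_contra h0
      have h1 : (i : ℕ) + 1 ≤ ((i : ℕ) + 1) * t i :=
        Nat.le_mul_of_pos_right _ (Nat.pos_of_ne_zero h0)
      have h2 : ((i : ℕ) + 1) * t i ≤ n := by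
        rw [← mem_A.mp ht]
        exact Finset.single_le_sum (f := fun j : Fin k => ((j : ℕ) + 1) * t j)
          (fun j _ => Nat.zero_le _) (Finset.mem_univ i)
      omega
    rw [h0]; simp

end PoiAux

namespace PoiAux

variable {k : ℕ}

noncomputable def h (k : ℕ) (lam : ℝ) (n : ℕ) : ℝ := ∑ t ∈ A k n, w k lam t

lemma recR (lam : ℝ) (n : ℕ) :
    (n : ℝ) * h k lam n =
      lam * ∑ i : Fin k, (if (i : ℕ) + 1 ≤ n then ((i : ℕ) + 1 : ℝ) * h k lam (n - ((i : ℕ) + 1)) else 0) := by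
  unfold h
  have L1 : (n : ℝ) * (∑ t ∈ A k n, w k lam t)
      = ∑ t ∈ A k n, ∑ i : Fin k, (((i : ℕ) + 1 : ℝ) * (t i : ℝ)) * w k lam t := by
    rw [Finset.mul_sum]
    refine Finset.sum_congr rfl fun t ht => ?_
    rw [← Finset.sum_mul]
    congr 1
    calc (n : ℝ) = ((∑ i : Fin k, ((i : ℕ) + 1) * t i : ℕ) : ℝ) := by rw [mem_A.mp ht]
      _ = _ := by push_cast; ring
  rw [L1, Finset.sum_comm, Finset.mul_sum]
  refine Finset.sum_congr rfl fun i _ => ?_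
  have L2 : ∑ t ∈ A k n, (((i : ℕ) + 1 : ℝ) * (t i : ℝ)) * w k lam t
      = ((i : ℕ) + 1 : ℝ) * ∑ t ∈ A k n, (t i : ℝ) * w k lam t := by
    rw [Finset.mul_sum]; exact Finset.sum_congr rfl fun t _ => by ring
  rw [L2, key]
  split_ifs with hc
  · ring
  · simp

lemma recR_le (lam : ℝ) {n : ℕ} (hn : n ≤ k) :
    (n : ℝ) * h k lam n =
      lam * ∑ j ∈ Finset.range n, ((j : ℝ) + 1) * h k lam (n - (j + 1)) := by
  rw [recR]
  congr 1
  rw [Fin.sum_univ_eq_sum_range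
    (fun j => if j + 1 ≤ n then ((j : ℝ) + 1) * h k lam (n - (j + 1)) else 0) k]
  rw [← Finset.sum_subset (Finset.range_subset_range.mpr hn)
    (fun j _ hj => by rw [if_neg]; rw [Finset.mem_range] at hj; omega)]
  exact Finset.sum_congr rfl fun j hj => by
    rw [if_pos]; rw [Finset.mem_range] at hj; omega

lemma recR_succ (lam : ℝ) :
    ((k : ℝ) + 1) * h k lam (k + 1) =
      lam * ∑ j ∈ Finset.range k, ((j : ℝ) + 1) * h k lam (k - j) := by
  have := recR (k := k) lam (k + 1)
  push_cast at this
  rw [this]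
  congr 1
  rw [Fin.sum_univ_eq_sum_range
    (fun j => if j ≤ k then ((j : ℝ) + 1) * h k lam (k - j) else 0) k]
  exact Finset.sum_congr rfl fun j hj => by
    rw [Finset.mem_range] at hj
    rw [if_pos (by omega)]

lemma h_zero (lam : ℝ) : h k lam 0 = 1 := by
  have hA0 : A k 0 = {fun _ => 0} := by
    ext t
    rw [mem_A, Finset.mem_singleton]
    constructor
    · intro ht
      funext i
      have := Finset.sum_eq_zero_iff.mp ht i (Finset.mem_univ i)
      exact (Nat.mul_eq_zero.mp this).resolve_left (Nat.succ_ne_zero _)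
    · intro ht; subst ht; simp
  rw [h, hA0, Finset.sum_singleton]
  simp [w]

lemma h_pos {lam : ℝ} (hlam : 0 < lam) (hk : 1 ≤ k) (n : ℕ) : 0 < h k lam n := by
  refine Finset.sum_pos (fun t _ => w_pos hlam t) ⟨Pi.single (⟨0, hk⟩ : Fin k) n, ?_⟩
  refine mem_A.mpr ?_
  rw [Finset.sum_eq_single (⟨0, hk⟩ : Fin k)
    (fun b _ hb => by simp [Pi.single_eq_of_ne hb])
    (fun hmem => absurd (Finset.mem_univ _) hmem)]
  simp

lemma h_ge_lam {lam : ℝ} (hlam : 0 < lam) (hk : 1 ≤ k) : lam ≤ h k lam k := by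
  have hmem : (Pi.single (⟨k - 1, by omega⟩ : Fin k) 1 : Fin k → ℕ) ∈ A k k := by
    refine mem_A.mpr ?_
    rw [Finset.sum_eq_single (⟨k - 1, by omega⟩ : Fin k)
      (fun b _ hb => by simp [Pi.single_eq_of_ne hb])
      (fun hmem => absurd (Finset.mem_univ _) hmem)]
    simp
    omega
  have h2 := Finset.single_le_sum (f := w k lam) (fun t _ => (w_pos hlam t).le) hmem
  rw [w_single] at h2
  simpa [h] using h2

end PoiAux

namespace PoiAux

variable {k : ℕ} {lam : ℝ}

lemma h_mono_step (hlam : 0 < lam) {m : ℕ} (h1 : 1 ≤ m) (h2 : m + 1 ≤ k) :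
    h k lam m ≤ h k lam (m + 1) := by
  have hk1 : 1 ≤ k := by omega
  set H := h k lam with hH
  set S := ∑ j ∈ Finset.range m, H (m - (j + 1)) with hS
  set T := ∑ j ∈ Finset.range m, ((j : ℝ) + 1) * H (m - (j + 1)) with hT
  have e1 : (m : ℝ) * H m = lam * T := recR_le lam (by omega)
  have e2 : ((m : ℝ) + 1) * H (m + 1)
      = lam * ∑ j ∈ Finset.range (m + 1), ((j : ℝ) + 1) * H (m - j) := by
    have e := recR_le (k := k) lam (show m + 1 ≤ k from h2)
    push_cast at e
    rw [e]
  have split : ∑ j ∈ Finset.range (m + 1), ((j : ℝ) + 1) * H (m - j) = (S + H m) + T := by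
    have t1 : ∀ j ∈ Finset.range (m + 1),
        ((j : ℝ) + 1) * H (m - j) = H (m - j) + (j : ℝ) * H (m - j) := fun j _ => by ring
    rw [Finset.sum_congr rfl t1, Finset.sum_add_distrib]
    congr 1
    · rw [Finset.sum_range_succ' (fun j => H (m - j)) m]
      simp [hS]
    · rw [Finset.sum_range_succ' (fun j => (j : ℝ) * H (m - j)) m]
      push_cast
      simp [hT]
  have hTS : T ≤ (m : ℝ) * S := by
    rw [hT, hS, Finset.mul_sum]
    refine Finset.sum_le_sum fun j hj => ?_
    have hj' : (j : ℝ) + 1 ≤ m := by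
      rw [Finset.mem_range] at hj
      exact_mod_cast Nat.succ_le_of_lt hj
    exact mul_le_mul_of_nonneg_right hj' (h_pos hlam hk1 _).le
  have hm0 : (0 : ℝ) < m := by exact_mod_cast h1
  have hHm : H m ≤ lam * S := by
    have h3 : (m : ℝ) * H m ≤ lam * ((m : ℝ) * S) := by
      rw [e1]
      exact mul_le_mul_of_nonneg_left hTS hlam.le
    nlinarith [h3, hm0]
  have hpos : 0 < H m := h_pos hlam hk1 m
  have hm1 : (0 : ℝ) < (m : ℝ) + 1 := by positivity
  rw [split] at e2
  nlinarith [e2, e1, hHm, hm0, hm1, mul_pos hlam hpos]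

lemma h_le_one (hlam : 0 < lam) (hk1 : 1 ≤ k) (h1 : h k lam k ≤ 1) :
    ∀ d m, m + d = k → 1 ≤ m → h k lam m ≤ 1 := by
  intro d
  induction d with
  | zero => intro m hm _; rw [show m = k from by omega]; exact h1
  | succ d ih =>
    intro m hm h1m
    have step : h k lam m ≤ h k lam (m + 1) := h_mono_step hlam h1m (by omega)
    exact step.trans (ih (m + 1) (by omega) (by omega))

end PoiAux

theorem stmt_2 (k : ℕ) (hk : 2 ≤ k) (lam : ℝ) (hlam : 0 < lam)
    (h1 : poissonOrderH k k lam ≤ 1) :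
    poissonOrderH k (k + 1) lam < poissonOrderH k k lam := by
  have hk1 : 1 ≤ k := by omega
  have hps : ∀ n, poissonOrderH k n lam = PoiAux.h k lam n := fun n => rfl
  rw [hps, hps] at *
  obtain ⟨c, rfl⟩ : ∃ c, k = c + 2 := ⟨k - 2, by omega⟩
  set H := PoiAux.h (c + 2) lam with hH
  have hle : ∀ m, 1 ≤ m → m ≤ c + 2 → H m ≤ 1 := fun m hm1 hm2 =>
    PoiAux.h_le_one hlam hk1 h1 (c + 2 - m) m (by omega) hm1
  have hlam1 : lam ≤ 1 := le_trans (PoiAux.h_ge_lam hlam hk1) h1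
  have hHk : 0 < H (c + 2) := PoiAux.h_pos hlam hk1 _
  have hH0 : H 0 = 1 := PoiAux.h_zero lam
  have e1 := PoiAux.recR_le (k := c + 2) lam (le_refl (c + 2))
  have e2 := PoiAux.recR_succ (k := c + 2) lam
  push_cast at e1 e2
  rw [← hH] at e1 e2
  set U := ∑ j ∈ Finset.range (c + 1), ((j : ℝ) + 1) * H (c + 1 - j) with hU
  set Ssum := ∑ j ∈ Finset.range (c + 1), H (c + 1 - j) with hSsum
  have eA : ∑ j ∈ Finset.range (c + 2), ((j : ℝ) + 1) * H (c + 2 - j)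
      = (U + Ssum) + H (c + 2) := by
    rw [Finset.sum_range_succ' (fun j => ((j : ℝ) + 1) * H (c + 2 - j)) (c + 1)]
    have t1 : ∀ j ∈ Finset.range (c + 1),
        (((j + 1 : ℕ) : ℝ) + 1) * H (c + 2 - (j + 1))
          = H (c + 1 - j) + ((j : ℝ) + 1) * H (c + 1 - j) := by
      intro j hj
      rw [show c + 2 - (j + 1) = c + 1 - j from by omega]
      push_cast
      ring
    rw [Finset.sum_congr rfl t1, Finset.sum_add_distrib]
    rw [hU, hSsum]
    norm_num
    ring
  have eB : ∑ j ∈ Finset.range (c + 2), ((j : ℝ) + 1) * H (c + 1 - j)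
      = U + ((c : ℝ) + 2) := by
    rw [Finset.sum_range_succ (fun j => ((j : ℝ) + 1) * H (c + 1 - j)) (c + 1)]
    rw [show c + 1 - (c + 1) = 0 from by omega, hH0, hU]
    push_cast
    ring
  have hS : Ssum ≤ (c : ℝ) + 1 := by
    calc Ssum ≤ ∑ j ∈ Finset.range (c + 1), (1 : ℝ) := by
          refine Finset.sum_le_sum fun j hj => ?_
          rw [Finset.mem_range] at hj
          exact hle (c + 1 - j) (by omega) (by omega)
      _ = (c : ℝ) + 1 := by
          rw [Finset.sum_const, Finset.card_range]
          push_cast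
          ring
  rw [eB] at e1
  rw [eA] at e2
  have hc3 : (0 : ℝ) < (c : ℝ) + 3 := by positivity
  nlinarith [e1, e2, hS, hlam, hlam1, hHk, hc3,
    mul_le_mul_of_nonneg_left hS hlam.le,
    mul_nonneg (sub_nonneg.mpr hlam1) hHk.le]
end

section
/- For every integer k ≥ 2 there exists a unique real λ > 0 such that h_k(k;λ) = 1, and this unique root r_k satisfies 0 < r_k < 1. -/
theorem stmt_3 (k : ℕ) (hk : 2 ≤ k) :
    ∃ r : ℝ, (0 < r ∧ r < 1 ∧ poissonOrderH k k r = 1) ∧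
      ∀ lam : ℝ, 0 < lam → poissonOrderH k k lam = 1 → lam = r := by
  have hkpos : 0 < k := by omega
  set S := (Fintype.piFinset fun _ : Fin k => Finset.range (k + 1)).filter
      (fun t => ∑ i : Fin k, ((i : ℕ) + 1) * t i = k) with hS
  have hH : ∀ lam : ℝ, poissonOrderH k k lam =
      ∑ t ∈ S, lam ^ (∑ i : Fin k, t i) / ∏ i : Fin k, (Nat.factorial (t i) : ℝ) := by
    intro lam; rfl
  set j : Fin k := ⟨k - 1, by omega⟩ with hj
  set t0 : Fin k → ℕ := fun i => if i = j then 1 else 0 with ht0def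
  set z : Fin k := ⟨0, hkpos⟩ with hz
  set t1 : Fin k → ℕ := fun i => if i = z then k else 0 with ht1def
  have ht0 : t0 ∈ S := by
    simp only [hS, Finset.mem_filter, Fintype.mem_piFinset, Finset.mem_range]
    constructor
    · intro i; by_cases h : i = j <;> simp [ht0def, h] <;> omega
    · simp only [ht0def, mul_ite, mul_one, mul_zero, Finset.sum_ite_eq',
        Finset.mem_univ, if_true, hj]
      omega
  have ht1 : t1 ∈ S := by
    simp only [hS, Finset.mem_filter, Fintype.mem_piFinset, Finset.mem_range]
    constructor
    · intro i; by_cases h : i = z <;> simp [ht1def, h] <;> omega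
    · simp only [ht1def, mul_ite, mul_zero, Finset.sum_ite_eq', Finset.mem_univ,
        if_true, hz]
      simp
  have ht0sum : (∑ i : Fin k, t0 i) = 1 := by
    simp [ht0def, Finset.sum_ite_eq']
  have ht0prod : (∏ i : Fin k, (Nat.factorial (t0 i) : ℝ)) = 1 := by
    apply Finset.prod_eq_one
    intro i _
    by_cases h : i = j <;> simp [ht0def, h]
  have hprodpos : ∀ t : Fin k → ℕ, 0 < ∏ i : Fin k, (Nat.factorial (t i) : ℝ) := by
    intro t
    apply Finset.prod_pos
    intro i _
    exact_mod_cast Nat.factorial_pos (t i)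
  have hterm_nonneg : ∀ (lam : ℝ), 0 ≤ lam → ∀ t : Fin k → ℕ,
      0 ≤ lam ^ (∑ i : Fin k, t i) / ∏ i : Fin k, (Nat.factorial (t i) : ℝ) := by
    intro lam hlam t
    exact div_nonneg (pow_nonneg hlam _) (hprodpos t).le
  -- strict monotonicity on [0, ∞)
  have hmono : ∀ a b : ℝ, 0 ≤ a → a < b →
      poissonOrderH k k a < poissonOrderH k k b := by
    intro a b ha hab
    rw [hH, hH]
    apply Finset.sum_lt_sum
    · intro t _
      gcongr
    · refine ⟨t0, ht0, ?_⟩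
      rw [ht0sum, ht0prod, pow_one, pow_one]
      simpa using hab
  -- value at 0
  have hG0 : poissonOrderH k k 0 = 0 := by
    rw [hH]
    apply Finset.sum_eq_zero
    intro t ht
    have hne : (∑ i : Fin k, t i) ≠ 0 := by
      intro h0
      have : ∀ i ∈ Finset.univ, t i = 0 := by
        rw [← Finset.sum_eq_zero_iff]; exact h0
      have hc : (∑ i : Fin k, ((i : ℕ) + 1) * t i) = k :=
        (Finset.mem_filter.mp ht).2
      rw [Finset.sum_congr rfl (fun i hi => by rw [this i hi, mul_zero])] at hc
      simp at hc; omega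
    rw [zero_pow hne, zero_div]
  -- value at 1
  have hG1 : 1 < poissonOrderH k k 1 := by
    rw [hH]
    have hsub : {t0} ⊆ S := Finset.singleton_subset_iff.mpr ht0
    have h01 : t1 ∉ ({t0} : Finset (Fin k → ℕ)) := by
      simp only [Finset.mem_singleton]
      intro h
      have := congrFun h z
      have hj0 : z ≠ j := by
        intro h'
        have : (0 : ℕ) = k - 1 := congrArg Fin.val h'
        
        omega
      simp [ht0def, ht1def, hj0] at this
      omega
    calc (1 : ℝ) = ∑ t ∈ ({t0} : Finset (Fin k → ℕ)),
          (1:ℝ) ^ (∑ i : Fin k, t i) / ∏ i : Fin k, (Nat.factorial (t i) : ℝ) := by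
          simp [ht0prod]
      _ < _ := by
          apply Finset.sum_lt_sum_of_subset hsub ht1 h01
          · exact div_pos (by positivity) (hprodpos t1)
          · intro t _ _; exact hterm_nonneg 1 zero_le_one t
  -- IVT
  have hcont : Continuous (poissonOrderH k k) := by
    have : poissonOrderH k k = fun lam =>
        ∑ t ∈ S, lam ^ (∑ i : Fin k, t i) / ∏ i : Fin k, (Nat.factorial (t i) : ℝ) := by
      funext lam; exact hH lam
    rw [this]
    exact continuous_finset_sum _ fun t _ => (continuous_pow _).div_const _
  obtain ⟨r, hrmem, hr⟩ := intermediate_value_Ioo (le_of_lt zero_lt_one)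
    hcont.continuousOn (by rw [hG0]; exact ⟨zero_lt_one, hG1⟩)
  refine ⟨r, ⟨hrmem.1, hrmem.2, hr⟩, ?_⟩
  intro lam hlam hlam1
  rcases lt_trichotomy lam r with h | h | h
  · exact absurd (hr ▸ hlam1 ▸ hmono lam r hlam.le h) (lt_irrefl 1)
  · exact h
  · exact absurd (hlam1 ▸ hr ▸ hmono r lam hrmem.1.le h) (lt_irrefl 1)
end

section
/- Let k ≥ 2 be an integer, λ > 0 a real number, and m ≥ 1 an integer such that both 0 and m are modes of the Poisson distribution of order k with parameter λ. Then k ≤ m < κ, where κ = k(k+1)/2. -/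
namespace StmtAux

open Finset

/-- weight of a tuple -/
def wt {k : ℕ} (t : Fin k → ℕ) : ℕ := ∑ i : Fin k, ((i : ℕ) + 1) * t i

noncomputable def term {k : ℕ} (lam : ℝ) (t : Fin k → ℕ) : ℝ :=
  lam ^ (∑ i : Fin k, t i) / ∏ i : Fin k, (Nat.factorial (t i) : ℝ)

def W (k N n : ℕ) : Finset (Fin k → ℕ) :=
  (Fintype.piFinset fun _ : Fin k => Finset.range (N + 1)).filter fun t => wt t = n

lemma poissonOrderH_eq_sum_W (k n : ℕ) (lam : ℝ) :
    poissonOrderH k n lam = ∑ t ∈ W k n n, term lam t := rfl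

lemma single_le_wt {k : ℕ} (t : Fin k → ℕ) (i : Fin k) : ((i : ℕ) + 1) * t i ≤ wt t := by
  unfold wt
  exact Finset.single_le_sum (f := fun j : Fin k => ((j : ℕ) + 1) * t j)
    (fun j _ => Nat.zero_le _) (mem_univ i)

lemma mem_W {k N n : ℕ} (hn : n ≤ N) {t : Fin k → ℕ} :
    t ∈ W k N n ↔ wt t = n := by
  simp only [W, mem_filter, Fintype.mem_piFinset, mem_range]
  constructor
  · rintro ⟨-, h⟩; exact h
  · intro h
    refine ⟨fun i => ?_, h⟩
    have h1 : t i ≤ ((i : ℕ) + 1) * t i := Nat.le_mul_of_pos_left _ (Nat.succ_pos _)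
    have h2 := single_le_wt t i
    omega

lemma h_eq {k n N : ℕ} (lam : ℝ) (hn : n ≤ N) :
    poissonOrderH k n lam = ∑ t ∈ W k N n, term lam t := by
  rw [poissonOrderH_eq_sum_W]
  apply Finset.sum_congr _ (fun _ _ => rfl)
  ext t
  rw [mem_W le_rfl, mem_W hn]

lemma prodfact_pos {k : ℕ} (t : Fin k → ℕ) : 0 < ∏ i : Fin k, (Nat.factorial (t i) : ℝ) :=
  Finset.prod_pos fun i _ => by exact_mod_cast (t i).factorial_pos

lemma term_nonneg {k : ℕ} {lam : ℝ} (h : 0 ≤ lam) (t : Fin k → ℕ) : 0 ≤ term lam t :=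
  div_nonneg (pow_nonneg h _) (prodfact_pos t).le

lemma h_zero (k : ℕ) (lam : ℝ) : poissonOrderH k 0 lam = 1 := by
  rw [poissonOrderH_eq_sum_W]
  have hW : W k 0 0 = {fun _ => 0} := by
    ext t
    rw [mem_W le_rfl, mem_singleton, wt, Finset.sum_eq_zero_iff]
    constructor
    · intro h; funext i; have := h i (mem_univ i); simpa using this
    · intro h i _; rw [h]; ring
  rw [hW, Finset.sum_singleton, term]
  simp

lemma mode_h {k m : ℕ} {lam : ℝ} (h : IsMode k lam m) (n : ℕ) :
    poissonOrderH k n lam ≤ poissonOrderH k m lam :=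
  le_of_mul_le_mul_left (h n) (Real.exp_pos _)

/-- single-index tuple -/
def e {k : ℕ} (i : Fin k) (c : ℕ) : Fin k → ℕ := fun j => if j = i then c else 0

lemma wt_e {k : ℕ} (i : Fin k) (c : ℕ) : wt (e i c) = ((i : ℕ) + 1) * c := by
  simp only [wt, e, mul_ite, mul_zero]
  rw [Finset.sum_ite_eq' univ i (fun j => ((j : ℕ) + 1) * c)]
  simp

lemma term_e {k : ℕ} (lam : ℝ) (i : Fin k) (c : ℕ) :
    term lam (e i c) = lam ^ c / (Nat.factorial c : ℝ) := by
  have h1 : ∑ j : Fin k, e i c j = c := by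
    simp only [e]
    rw [Finset.sum_ite_eq' univ i (fun _ => c)]
    simp
  have h2 : ∏ j : Fin k, (Nat.factorial (e i c j) : ℝ) = (Nat.factorial c : ℝ) := by
    simp only [e, apply_ite Nat.factorial, Nat.factorial_zero, apply_ite (Nat.cast : ℕ → ℝ),
      Nat.cast_one]
    rw [Finset.prod_ite_eq' univ i (fun _ => (Nat.factorial c : ℝ))]
    simp
  rw [term, h1, h2]

lemma wt_update {k : ℕ} (t : Fin k → ℕ) (i : Fin k) (v : ℕ) :
    wt (Function.update t i v) + ((i : ℕ) + 1) * t i = wt t + ((i : ℕ) + 1) * v := by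
  unfold wt
  rw [← Finset.add_sum_erase _ (fun j : Fin k => ((j : ℕ) + 1) * Function.update t i v j) (mem_univ i),
    ← Finset.add_sum_erase _ (fun j : Fin k => ((j : ℕ) + 1) * t j) (mem_univ i)]
  rw [Function.update_self]
  rw [Finset.sum_congr rfl (fun j hj => by
    rw [Function.update_of_ne (Finset.ne_of_mem_erase hj)])]
  ring

lemma term_decomp {k : ℕ} (lam : ℝ) (t : Fin k → ℕ) (i : Fin k) :
    term lam t = lam ^ (t i + ∑ j ∈ univ.erase i, t j) /
      ((Nat.factorial (t i) : ℝ) * ∏ j ∈ univ.erase i, (Nat.factorial (t j) : ℝ)) := by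
  rw [term, ← Finset.add_sum_erase _ t (mem_univ i),
    ← Finset.mul_prod_erase _ (fun j => (Nat.factorial (t j) : ℝ)) (mem_univ i)]

lemma term_update {k : ℕ} (lam : ℝ) (t : Fin k → ℕ) (i : Fin k) (v : ℕ) :
    term lam (Function.update t i v) = lam ^ (v + ∑ j ∈ univ.erase i, t j) /
      ((Nat.factorial v : ℝ) * ∏ j ∈ univ.erase i, (Nat.factorial (t j) : ℝ)) := by
  rw [term_decomp lam _ i, Function.update_self]
  congr 2
  · congr 1
    exact Finset.sum_congr rfl fun j hj => by
      rw [Function.update_of_ne (Finset.ne_of_mem_erase hj)]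
  · exact Finset.prod_congr rfl fun j hj => by
      rw [Function.update_of_ne (Finset.ne_of_mem_erase hj)]

lemma term_update_one {k : ℕ} (lam : ℝ) (u : Fin k → ℕ) (i : Fin k) (hu : u i = 0) :
    term lam (Function.update u i 1) = lam * term lam u := by
  rw [term_update, term_decomp lam u i, hu]
  have hP := Finset.prod_pos (fun j (_ : j ∈ univ.erase i) =>
    (by exact_mod_cast (u j).factorial_pos : (0:ℝ) < (Nat.factorial (u j) : ℝ)))
  simp only [Nat.factorial_one, Nat.factorial_zero, Nat.cast_one, one_mul, zero_add]
  rw [pow_add, pow_one]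
  ring

lemma term_update_sub {k : ℕ} (lam : ℝ) (t : Fin k → ℕ) (i : Fin k) (ht : t i ≠ 0) :
    lam * term lam (Function.update t i (t i - 1)) = (t i : ℝ) * term lam t := by
  obtain ⟨c, hc⟩ : ∃ c, t i = c + 1 := ⟨t i - 1, by omega⟩
  rw [term_update, term_decomp lam t i, hc]
  have hP := Finset.prod_pos (fun j (_ : j ∈ univ.erase i) =>
    (by exact_mod_cast (t j).factorial_pos : (0:ℝ) < (Nat.factorial (t j) : ℝ)))
  have hc1 : (0:ℝ) < (Nat.factorial c : ℝ) := by exact_mod_cast c.factorial_pos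
  simp only [Nat.add_sub_cancel, Nat.factorial_succ]
  push_cast
  rw [pow_add, pow_add]
  field_simp
  ring


/-- the largest index with nonzero entry (junk value if t = 0) -/
def J {k : ℕ} (hk : 0 < k) (t : Fin k → ℕ) : Fin k :=
  if h : (Finset.univ.filter fun i => t i ≠ 0).Nonempty
  then (Finset.univ.filter fun i => t i ≠ 0).max' h else ⟨0, hk⟩

lemma J_eq {k : ℕ} (hk : 0 < k) {t : Fin k → ℕ} {a : Fin k} (ha : t a ≠ 0)
    (hmax : ∀ i, t i ≠ 0 → i ≤ a) : J hk t = a := by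
  have hne : (Finset.univ.filter fun i => t i ≠ 0).Nonempty := ⟨a, by simp [ha]⟩
  rw [J, dif_pos hne]
  apply le_antisymm
  · apply Finset.max'_le
    intro b hb
    simp only [mem_filter, mem_univ, true_and] at hb
    exact hmax b hb
  · apply Finset.le_max'
    simp [ha]

lemma J_spec {k n : ℕ} (hk : 0 < k) {t : Fin k → ℕ} (ht : wt t = n) (hn : 1 ≤ n) :
    t (J hk t) ≠ 0 ∧ (∀ i, t i ≠ 0 → i ≤ J hk t) ∧ ((J hk t) : ℕ) + 1 ≤ n := by
  have hne : (Finset.univ.filter fun i => t i ≠ 0).Nonempty := by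
    by_contra h
    rw [Finset.not_nonempty_iff_eq_empty, Finset.filter_eq_empty_iff] at h
    have : wt t = 0 := by
      unfold wt
      apply Finset.sum_eq_zero
      intro i hi
      have : t i = 0 := by have := h hi; simpa using this
      rw [this, mul_zero]
    omega
  have hJ : J hk t = (Finset.univ.filter fun i => t i ≠ 0).max' hne := dif_pos hne
  have h1 : t (J hk t) ≠ 0 := by
    have := Finset.max'_mem _ hne
    rw [← hJ] at this
    simpa using this
  have h2 : ∀ i, t i ≠ 0 → i ≤ J hk t := by
    intro i hi
    rw [hJ]
    exact Finset.le_max' _ _ (by simp [hi])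
  refine ⟨h1, h2, ?_⟩
  have hle : ((J hk t : ℕ) + 1) * t (J hk t) ≤ wt t := single_le_wt t _
  have : 1 ≤ t (J hk t) := Nat.one_le_iff_ne_zero.2 h1
  have : ((J hk t : ℕ) + 1) * 1 ≤ ((J hk t : ℕ) + 1) * t (J hk t) :=
    Nat.mul_le_mul_left _ this
  omega

def J' {k : ℕ} (hk : 0 < k) (d : ℕ) (t : Fin k → ℕ) : Fin k :=
  ⟨(((J hk t) : ℕ) + d) % k, Nat.mod_lt _ hk⟩

noncomputable def phi {k : ℕ} (hk : 0 < k) (d : ℕ) (t : Fin k → ℕ) : Fin k → ℕ :=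
  Function.update (Function.update t (J hk t) (t (J hk t) - 1)) (J' hk d t) 1

section PhiFacts

variable {k n : ℕ} (hk : 0 < k) {t : Fin k → ℕ}

lemma J'_val (ht : wt t = n) (hn : 1 ≤ n) (hnk : n < k) :
    ((J' hk (k - n) t : ℕ)) = ((J hk t) : ℕ) + (k - n) := by
  obtain ⟨-, -, h3⟩ := J_spec hk ht hn
  have : ((J hk t) : ℕ) + (k - n) < k := by omega
  simp only [J']
  exact Nat.mod_eq_of_lt this

lemma J'_ne (ht : wt t = n) (hn : 1 ≤ n) (hnk : n < k) : J' hk (k - n) t ≠ J hk t := by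
  have h := J'_val hk ht hn hnk
  intro hcon
  rw [hcon] at h
  omega

lemma t_J'_eq_zero (ht : wt t = n) (hn : 1 ≤ n) (hnk : n < k) : t (J' hk (k - n) t) = 0 := by
  obtain ⟨-, h2, -⟩ := J_spec hk ht hn
  by_contra h
  have := h2 _ h
  have hv := J'_val hk ht hn hnk
  have : ((J' hk (k - n) t : ℕ)) ≤ ((J hk t) : ℕ) := this
  omega

lemma wt_phi (ht : wt t = n) (hn : 1 ≤ n) (hnk : n < k) : wt (phi hk (k - n) t) = k := by
  obtain ⟨h1, -, h3⟩ := J_spec hk ht hn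
  set u := Function.update t (J hk t) (t (J hk t) - 1) with hu
  have hwu : wt u + ((J hk t : ℕ) + 1) * t (J hk t) = wt t + ((J hk t : ℕ) + 1) * (t (J hk t) - 1) :=
    wt_update t _ _
  have huJ' : u (J' hk (k - n) t) = 0 := by
    rw [hu, Function.update_of_ne (J'_ne hk ht hn hnk), t_J'_eq_zero hk ht hn hnk]
  have hwp : wt (phi hk (k - n) t) + ((J' hk (k - n) t : ℕ) + 1) * u (J' hk (k - n) t)
      = wt u + ((J' hk (k - n) t : ℕ) + 1) * 1 := wt_update u _ _
  rw [huJ'] at hwp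
  have hv := J'_val hk ht hn hnk
  obtain ⟨c, hc⟩ : ∃ c, t (J hk t) = c + 1 := ⟨t (J hk t) - 1, by omega⟩
  rw [hc] at hwu
  have hmul : ((J hk t : ℕ) + 1) * (c + 1) = ((J hk t : ℕ) + 1) * c + ((J hk t : ℕ) + 1) := by ring
  simp only [Nat.add_sub_cancel] at hwu
  omega

lemma term_phi (lam : ℝ) (ht : wt t = n) (hn : 1 ≤ n) (hnk : n < k) :
    term lam (phi hk (k - n) t) = (t (J hk t) : ℝ) * term lam t := by
  obtain ⟨h1, -, -⟩ := J_spec hk ht hn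
  have huJ' : (Function.update t (J hk t) (t (J hk t) - 1)) (J' hk (k - n) t) = 0 := by
    rw [Function.update_of_ne (J'_ne hk ht hn hnk), t_J'_eq_zero hk ht hn hnk]
  rw [phi, term_update_one lam _ _ huJ', term_update_sub lam t _ h1]

lemma phi_J'_eq_one (ht : wt t = n) (hn : 1 ≤ n) (hnk : n < k) :
    phi hk (k - n) t (J' hk (k - n) t) = 1 := by
  rw [phi, Function.update_self]

lemma phi_max (ht : wt t = n) (hn : 1 ≤ n) (hnk : n < k) :
    ∀ i, phi hk (k - n) t i ≠ 0 → i ≤ J' hk (k - n) t := by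
  obtain ⟨-, h2, -⟩ := J_spec hk ht hn
  have hv := J'_val hk ht hn hnk
  have hJle : J hk t ≤ J' hk (k - n) t := by
    rw [Fin.le_def]; omega
  intro i hi
  by_cases hiJ' : i = J' hk (k - n) t
  · exact le_of_eq hiJ'
  by_cases hiJ : i = J hk t
  · rw [hiJ]; exact hJle
  · rw [phi, Function.update_of_ne hiJ', Function.update_of_ne hiJ] at hi
    exact le_trans (h2 i hi) hJle

lemma J_phi (ht : wt t = n) (hn : 1 ≤ n) (hnk : n < k) :
    J hk (phi hk (k - n) t) = J' hk (k - n) t := by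
  apply J_eq
  · rw [phi_J'_eq_one hk ht hn hnk]; exact one_ne_zero
  · exact phi_max hk ht hn hnk

lemma phi_recover (ht : wt t = n) (hn : 1 ≤ n) (hnk : n < k) :
    t = Function.update (Function.update (phi hk (k - n) t) (J' hk (k - n) t) 0)
        (J hk t) (phi hk (k - n) t (J hk t) + 1) := by
  obtain ⟨h1, -, -⟩ := J_spec hk ht hn
  have hne := J'_ne hk ht hn hnk
  funext i
  by_cases hiJ : i = J hk t
  · rw [hiJ, Function.update_self, phi, Function.update_of_ne (Ne.symm hne), Function.update_self]
    omega
  · rw [Function.update_of_ne hiJ]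
    by_cases hiJ' : i = J' hk (k - n) t
    · rw [hiJ', Function.update_self, t_J'_eq_zero hk ht hn hnk]
    · rw [Function.update_of_ne hiJ', phi, Function.update_of_ne hiJ',
        Function.update_of_ne hiJ]

end PhiFacts


lemma stepB {k : ℕ} (hk : 2 ≤ k) (lam : ℝ) (hl : 0 < lam) :
    lam + lam ^ k / (Nat.factorial k : ℝ) ≤ poissonOrderH k k lam := by
  have hk0 : 0 < k := by omega
  set a : Fin k → ℕ := e (⟨k - 1, by omega⟩ : Fin k) 1 with ha'
  set b : Fin k → ℕ := e (⟨0, hk0⟩ : Fin k) k with hb'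
  have ha : a ∈ W k k k := (mem_W le_rfl).2 (by rw [ha', wt_e]; simp; omega)
  have hb : b ∈ W k k k := (mem_W le_rfl).2 (by rw [hb', wt_e]; simp)
  have hab : a ≠ b := by
    have h0 : (⟨0, hk0⟩ : Fin k) ≠ (⟨k - 1, by omega⟩ : Fin k) := by
      simp only [ne_eq, Fin.mk.injEq]
      omega
    intro h
    have hcf := congrFun h ⟨0, hk0⟩
    rw [ha', hb'] at hcf
    simp only [e] at hcf
    rw [if_neg h0] at hcf
    simp only [if_true, if_pos] at hcf
    omega
  have hsum : lam + lam ^ k / (Nat.factorial k : ℝ) = ∑ t ∈ ({a, b} : Finset (Fin k → ℕ)), term lam t := by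
    rw [Finset.sum_pair hab, ha', hb', term_e, term_e]
    simp
  rw [hsum, h_eq lam (le_refl k)]
  apply Finset.sum_le_sum_of_subset_of_nonneg
  · intro x hx
    rcases Finset.mem_insert.1 hx with h | h
    · rw [h]; exact ha
    · rw [Finset.mem_singleton.1 h]; exact hb
  · intro x _ _
    exact term_nonneg hl.le x

lemma stepC {k n : ℕ} (lam : ℝ) (hl : 0 < lam) (hn1 : 1 ≤ n) (hnk : n < k) :
    poissonOrderH k n lam + lam ^ k / (Nat.factorial k : ℝ) ≤ poissonOrderH k k lam := by
  have hk0 : 0 < k := by omega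
  have hmemW : ∀ t ∈ W k k n, wt t = n := fun t ht => (mem_W hnk.le).1 ht
  -- pointwise bound
  have hpt : ∀ t ∈ W k k n, term lam t ≤ term lam (phi hk0 (k - n) t) := by
    intro t ht
    have htw := hmemW t ht
    rw [term_phi hk0 lam htw hn1 hnk]
    obtain ⟨h1, -, -⟩ := J_spec hk0 htw hn1
    have h1' : (1 : ℝ) ≤ (t (J hk0 t) : ℝ) := by exact_mod_cast Nat.one_le_iff_ne_zero.2 h1
    nlinarith [term_nonneg hl.le t]
  have hinj : ∀ t ∈ W k k n, ∀ t' ∈ W k k n,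
      phi hk0 (k - n) t = phi hk0 (k - n) t' → t = t' := by
    intro t ht t' ht' heq
    have htw := hmemW t ht
    have htw' := hmemW t' ht'
    have hJ' : J' hk0 (k - n) t = J' hk0 (k - n) t' := by
      rw [← J_phi hk0 htw hn1 hnk, ← J_phi hk0 htw' hn1 hnk, heq]
    have hJ : J hk0 t = J hk0 t' := by
      have v1 := J'_val hk0 htw hn1 hnk
      have v2 := J'_val hk0 htw' hn1 hnk
      have : ((J' hk0 (k - n) t : ℕ)) = ((J' hk0 (k - n) t' : ℕ)) := by rw [hJ']
      apply Fin.ext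
      omega
    rw [phi_recover hk0 htw hn1 hnk, phi_recover hk0 htw' hn1 hnk, heq, hJ', hJ]
  -- e 0 k is in W k k k but not in the image
  have hbmem : e (⟨0, hk0⟩ : Fin k) k ∈ W k k k := (mem_W le_rfl).2 (by rw [wt_e]; simp)
  have hbnot : e (⟨0, hk0⟩ : Fin k) k ∉ (W k k n).image (phi hk0 (k - n)) := by
    intro hmem
    obtain ⟨t, ht, heq⟩ := Finset.mem_image.1 hmem
    have htw := hmemW t ht
    have h1 := phi_J'_eq_one hk0 htw hn1 hnk
    have hv := J'_val hk0 htw hn1 hnk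
    have hne0 : J' hk0 (k - n) t ≠ ⟨0, hk0⟩ := by
      intro hcon
      have : ((J' hk0 (k - n) t : ℕ)) = 0 := by rw [hcon]
      omega
    have := congrFun heq (J' hk0 (k - n) t)
    rw [h1] at this
    simp only [e, if_neg hne0] at this
    omega
  have hsub : (W k k n).image (phi hk0 (k - n)) ⊆ (W k k k).erase (e (⟨0, hk0⟩ : Fin k) k) := by
    intro u hu
    obtain ⟨t, ht, rfl⟩ := Finset.mem_image.1 hu
    apply Finset.mem_erase.2
    constructor
    · intro hcon
      exact hbnot (by rw [← hcon]; exact Finset.mem_image_of_mem _ ht)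
    · exact (mem_W le_rfl).2 (wt_phi hk0 (hmemW t ht) hn1 hnk)
  have key : poissonOrderH k n lam ≤ poissonOrderH k k lam - lam ^ k / (Nat.factorial k : ℝ) :=
    calc poissonOrderH k n lam = ∑ t ∈ W k k n, term lam t := h_eq lam hnk.le
    _ ≤ ∑ t ∈ W k k n, term lam (phi hk0 (k - n) t) := Finset.sum_le_sum hpt
    _ = ∑ u ∈ (W k k n).image (phi hk0 (k - n)), term lam u := (Finset.sum_image hinj).symm
    _ ≤ ∑ u ∈ (W k k k).erase (e (⟨0, hk0⟩ : Fin k) k), term lam u :=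
        Finset.sum_le_sum_of_subset_of_nonneg hsub (fun u _ _ => term_nonneg hl.le u)
    _ = (∑ u ∈ W k k k, term lam u) - term lam (e (⟨0, hk0⟩ : Fin k) k) :=
        Finset.sum_erase_eq_sub hbmem
    _ = poissonOrderH k k lam - lam ^ k / (Nat.factorial k : ℝ) := by
        rw [← h_eq lam le_rfl, term_e]
  linarith

lemma stepD1 {k : ℕ} (n : ℕ) (lam : ℝ) (hl : 0 < lam) (i : Fin k) :
    ∑ t ∈ W k n n, (t i : ℝ) * term lam t
      ≤ lam * poissonOrderH k (n - ((i : ℕ) + 1)) lam := by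
  classical
  set s := (W k n n).filter fun t => t i ≠ 0 with hs
  have h1 : ∑ t ∈ W k n n, (t i : ℝ) * term lam t = ∑ t ∈ s, (t i : ℝ) * term lam t := by
    rw [hs]
    refine (Finset.sum_filter_of_ne ?_).symm
    intro t _ hne
    intro h0
    rw [h0] at hne
    simp at hne
  set psi : (Fin k → ℕ) → (Fin k → ℕ) := fun t => Function.update t i (t i - 1) with hpsi
  have hterm : ∀ t ∈ s, (t i : ℝ) * term lam t = lam * term lam (psi t) := by
    intro t ht
    have hti : t i ≠ 0 := (Finset.mem_filter.1 ht).2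
    rw [hpsi]
    exact (term_update_sub lam t i hti).symm
  have hinj : ∀ t ∈ s, ∀ t' ∈ s, psi t = psi t' → t = t' := by
    intro t ht t' ht' heq
    have hti : t i ≠ 0 := (Finset.mem_filter.1 ht).2
    have hti' : t' i ≠ 0 := (Finset.mem_filter.1 ht').2
    funext j
    by_cases hj : j = i
    · have := congrFun heq i
      rw [hpsi] at this
      simp only [Function.update_self] at this
      rw [hj]
      omega
    · have := congrFun heq j
      rw [hpsi] at this
      simpa [Function.update_of_ne hj] using this
  have hsub : s.image psi ⊆ W k n (n - ((i : ℕ) + 1)) := by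
    intro u hu
    obtain ⟨t, ht, rfl⟩ := Finset.mem_image.1 hu
    have htW : wt t = n := (mem_W le_rfl).1 (Finset.mem_filter.1 ht).1
    have hti : t i ≠ 0 := (Finset.mem_filter.1 ht).2
    apply (mem_W (Nat.sub_le _ _)).2
    have hwu := wt_update t i (t i - 1)
    have hle : ((i : ℕ) + 1) * t i ≤ wt t := single_le_wt t i
    have hmul : ((i : ℕ) + 1) * t i = ((i : ℕ) + 1) * (t i - 1) + ((i : ℕ) + 1) := by
      obtain ⟨c, hc⟩ : ∃ c, t i = c + 1 := ⟨t i - 1, by omega⟩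
      rw [hc]
      simp only [Nat.add_sub_cancel]
      ring
    rw [htW] at hwu hle
    show wt (Function.update t i (t i - 1)) = n - ((i : ℕ) + 1)
    omega
  calc ∑ t ∈ W k n n, (t i : ℝ) * term lam t = ∑ t ∈ s, lam * term lam (psi t) := by
        rw [h1]; exact Finset.sum_congr rfl hterm
    _ = lam * ∑ t ∈ s, term lam (psi t) := by rw [Finset.mul_sum]
    _ = lam * ∑ u ∈ s.image psi, term lam u := by rw [Finset.sum_image hinj]
    _ ≤ lam * ∑ u ∈ W k n (n - ((i : ℕ) + 1)), term lam u := by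
        apply mul_le_mul_of_nonneg_left _ hl.le
        exact Finset.sum_le_sum_of_subset_of_nonneg hsub (fun u _ _ => term_nonneg hl.le u)
    _ = lam * poissonOrderH k (n - ((i : ℕ) + 1)) lam := by
        rw [← h_eq lam (Nat.sub_le _ _)]

lemma stepD {k : ℕ} (n : ℕ) (lam : ℝ) (hl : 0 < lam)
    (H : ∀ j, poissonOrderH k j lam ≤ 1) :
    (n : ℝ) * poissonOrderH k n lam ≤ lam * ∑ i : Fin k, (((i : ℕ) : ℝ) + 1) := by
  rw [h_eq lam (le_refl n)]
  have hmain : ∀ t ∈ W k n n, (n : ℝ) * term lam t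
      = ∑ i : Fin k, (((i : ℕ) : ℝ) + 1) * ((t i : ℝ) * term lam t) := by
    intro t ht
    have htw : wt t = n := (mem_W le_rfl).1 ht
    have hcast : (n : ℝ) = ∑ i : Fin k, (((i : ℕ) : ℝ) + 1) * (t i : ℝ) := by
      rw [← htw, wt]
      push_cast
      rfl
    rw [hcast, Finset.sum_mul]
    exact Finset.sum_congr rfl fun i _ => by ring
  calc (n : ℝ) * ∑ t ∈ W k n n, term lam t
      = ∑ t ∈ W k n n, (n : ℝ) * term lam t := by rw [Finset.mul_sum]
    _ = ∑ t ∈ W k n n, ∑ i : Fin k, (((i : ℕ) : ℝ) + 1) * ((t i : ℝ) * term lam t) :=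
        Finset.sum_congr rfl hmain
    _ = ∑ i : Fin k, ∑ t ∈ W k n n, (((i : ℕ) : ℝ) + 1) * ((t i : ℝ) * term lam t) :=
        Finset.sum_comm
    _ ≤ ∑ i : Fin k, lam * (((i : ℕ) : ℝ) + 1) := by
        apply Finset.sum_le_sum
        intro i _
        rw [← Finset.mul_sum]
        have hD1 := stepD1 n lam hl i
        have hH := H (n - ((i : ℕ) + 1))
        have hpos : (0 : ℝ) ≤ ((i : ℕ) : ℝ) + 1 := by positivity
        calc (((i : ℕ) : ℝ) + 1) * ∑ t ∈ W k n n, (t i : ℝ) * term lam t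
            ≤ (((i : ℕ) : ℝ) + 1) * (lam * poissonOrderH k (n - ((i : ℕ) + 1)) lam) :=
              mul_le_mul_of_nonneg_left hD1 hpos
          _ ≤ (((i : ℕ) : ℝ) + 1) * (lam * 1) := by
              apply mul_le_mul_of_nonneg_left _ hpos
              exact mul_le_mul_of_nonneg_left hH hl.le
          _ = lam * (((i : ℕ) : ℝ) + 1) := by ring
    _ = lam * ∑ i : Fin k, (((i : ℕ) : ℝ) + 1) := by rw [Finset.mul_sum]

lemma sum_fin_succ (k : ℕ) : (∑ i : Fin k, ((i : ℕ) + 1)) = k * (k + 1) / 2 := by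
  rw [Fin.sum_univ_eq_sum_range (fun i => i + 1) k]
  induction k with
  | zero => simp
  | succ n ih =>
    rw [Finset.sum_range_succ, ih]
    have h1 : n * (n + 1) / 2 * 2 = n * (n + 1) :=
      Nat.div_mul_cancel (Nat.even_mul_succ_self n).two_dvd
    have h2 : (n + 1) * (n + 1 + 1) / 2 * 2 = (n + 1) * (n + 1 + 1) :=
      Nat.div_mul_cancel (Nat.even_mul_succ_self (n + 1)).two_dvd
    have h3 : (n + 1) * (n + 1 + 1) = n * (n + 1) + 2 * (n + 1) := by ring
    omega


end StmtAux

theorem stmt_6 (k : ℕ) (hk : 2 ≤ k) (lam : ℝ) (hlam : 0 < lam)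
    (m : ℕ) (hm : 1 ≤ m) (h0 : IsMode k lam 0) (hmm : IsMode k lam m) :
    k ≤ m ∧ m < k * (k + 1) / 2 := by
  open StmtAux in
  have hk0 : 0 < k := by omega
  have H1 : ∀ n, poissonOrderH k n lam ≤ 1 := by
    intro n
    have := mode_h h0 n
    rwa [h_zero] at this
  have Hm : poissonOrderH k m lam = 1 := by
    apply le_antisymm (H1 m)
    have := mode_h hmm 0
    rwa [h_zero] at this
  have hfac : (0 : ℝ) < (Nat.factorial k : ℝ) := by exact_mod_cast k.factorial_pos
  have hpk : (0 : ℝ) < lam ^ k / (Nat.factorial k : ℝ) := div_pos (pow_pos hlam k) hfac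
  have hBk := le_trans (stepB hk lam hlam) (H1 k)
  have hl1 : lam < 1 := by linarith
  constructor
  · by_contra h
    push_neg at h
    have hC := stepC lam hlam hm h
    rw [Hm] at hC
    have := H1 k
    linarith
  · by_contra h
    push_neg at h
    have hD := stepD m lam hlam H1
    rw [Hm, mul_one] at hD
    have hcast : (∑ i : Fin k, (((i : ℕ) : ℝ) + 1)) = ((k * (k + 1) / 2 : ℕ) : ℝ) := by
      rw [← sum_fin_succ k]
      push_cast
      rfl
    rw [hcast] at hD
    have hmk : ((k * (k + 1) / 2 : ℕ) : ℝ) ≤ (m : ℝ) := Nat.cast_le.2 h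
    have hkpos : (0 : ℝ) < ((k * (k + 1) / 2 : ℕ) : ℝ) := by
      have h6 : 6 ≤ k * (k + 1) := by nlinarith
      have : 0 < k * (k + 1) / 2 := Nat.div_pos (le_trans (by norm_num) h6) (by norm_num)
      exact_mod_cast this
    nlinarith
end

section
/- Let k ≥ 2 be an integer, λ > 0 a real number, and m ≥ 1 an integer such that both 0 and m are modes of the Poisson distribution of order k with parameter λ, and let r > 0 be a real number with h_k(k;r) = 1. Then 2/(k+1) ≤ λ ≤ r < 1. -/
open Finset

private def pF (k n : ℕ) : Finset (Fin k → ℕ) :=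
  (Fintype.piFinset fun _ : Fin k => Finset.range (n + 1)) |>.filter
      (fun t => ∑ i : Fin k, ((i : ℕ) + 1) * t i = n)

private lemma mem_pF {k n : ℕ} {t : Fin k → ℕ} :
    t ∈ pF k n ↔ ∑ i : Fin k, ((i : ℕ) + 1) * t i = n := by
  constructor
  · exact fun h => (Finset.mem_filter.mp h).2
  · intro h
    refine Finset.mem_filter.mpr ⟨?_, h⟩
    rw [Fintype.mem_piFinset]
    intro j
    rw [Finset.mem_range, Nat.lt_succ_iff]
    calc t j ≤ ((j : ℕ) + 1) * t j := Nat.le_mul_of_pos_left _ (Nat.succ_pos _)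
      _ ≤ ∑ i : Fin k, ((i : ℕ) + 1) * t i :=
        Finset.single_le_sum (f := fun i : Fin k => ((i:ℕ)+1) * t i) (fun i _ => Nat.zero_le _) (Finset.mem_univ j)
      _ = n := h

private lemma h_eq (k n : ℕ) (lam : ℝ) :
    poissonOrderH k n lam =
      ∑ t ∈ pF k n, lam ^ (∑ i : Fin k, t i) / ∏ i : Fin k, (Nat.factorial (t i) : ℝ) := rfl

private lemma h_zero (k : ℕ) (lam : ℝ) : poissonOrderH k 0 lam = 1 := by
  rw [h_eq]
  have : pF k 0 = {fun _ => 0} := by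
    ext t
    rw [mem_pF, Finset.mem_singleton]
    constructor
    · intro h
      funext j
      have := Finset.sum_eq_zero_iff.mp h j (Finset.mem_univ j)
      simpa using this
    · intro h; subst h; simp
  rw [this]
  simp

private lemma term_nonneg {lam : ℝ} (hlam : 0 ≤ lam) {k : ℕ} (t : Fin k → ℕ) :
    0 ≤ lam ^ (∑ i : Fin k, t i) / ∏ i : Fin k, (Nat.factorial (t i) : ℝ) := by
  apply div_nonneg (pow_nonneg hlam _)
  exact Finset.prod_nonneg fun i _ => by positivity

private lemma h_mono {a b : ℝ} (ha : 0 ≤ a) (hab : a ≤ b) (k n : ℕ) :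
    poissonOrderH k n a ≤ poissonOrderH k n b := by
  rw [h_eq, h_eq]
  refine Finset.sum_le_sum fun t _ => ?_
  have hP : (0:ℝ) < ∏ i : Fin k, (Nat.factorial (t i) : ℝ) :=
    Finset.prod_pos fun i _ => by positivity
  exact div_le_div_of_nonneg_right (pow_le_pow_left₀ ha hab _) hP.le

private lemma basic_tuple_mem {k n : ℕ} (hk : 0 < k) :
    (fun j : Fin k => if j = ⟨0, hk⟩ then n else 0) ∈ pF k n := by
  rw [mem_pF]
  rw [Finset.sum_eq_single (⟨0, hk⟩ : Fin k)]
  · simp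
  · intro b _ hb; simp [hb]
  · simp


private lemma h_strict_mono {a b : ℝ} (ha : 0 ≤ a) (hab : a < b) {k n : ℕ}
    (hk : 0 < k) (hn : 1 ≤ n) :
    poissonOrderH k n a < poissonOrderH k n b := by
  rw [h_eq, h_eq]
  refine Finset.sum_lt_sum (fun t _ => ?_) ?_
  · have hP : (0:ℝ) < ∏ i : Fin k, (Nat.factorial (t i) : ℝ) :=
      Finset.prod_pos fun i _ => by positivity
    exact div_le_div_of_nonneg_right (pow_le_pow_left₀ ha hab.le _) hP.le
  · refine ⟨fun j : Fin k => if j = ⟨0, hk⟩ then n else 0, basic_tuple_mem hk, ?_⟩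
    have hP : (0:ℝ) < ∏ i : Fin k,
        (Nat.factorial ((fun j : Fin k => if j = ⟨0, hk⟩ then n else 0) i) : ℝ) :=
      Finset.prod_pos fun i _ => by positivity
    have hs : (∑ i : Fin k, (fun j : Fin k => if j = ⟨0, hk⟩ then n else 0) i) = n := by
      rw [Finset.sum_eq_single (⟨0, hk⟩ : Fin k)]
      · simp
      · intro b _ hb; simp [hb]
      · simp
    rw [hs]
    exact (div_lt_div_iff_of_pos_right hP).mpr (pow_lt_pow_left₀ hab ha (by omega))

private lemma one_lt_h_one {k : ℕ} (hk : 2 ≤ k) : 1 < poissonOrderH k k 1 := by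
  have hk0 : 0 < k := by omega
  set ta : Fin k → ℕ := fun j => if j = ⟨0, hk0⟩ then k else 0 with hta
  set tb : Fin k → ℕ := fun j => if j = ⟨k - 1, by omega⟩ then 1 else 0 with htb
  have hmem_a : ta ∈ pF k k := basic_tuple_mem hk0
  have hmem_b : tb ∈ pF k k := by
    rw [mem_pF]
    rw [Finset.sum_eq_single (⟨k - 1, by omega⟩ : Fin k)]
    · simp [htb]; omega
    · intro b _ hb; simp [htb, hb]
    · simp
  have hne : ta ≠ tb := by
    intro h
    have := congrFun h ⟨0, hk0⟩
    have hne2 : (⟨0, hk0⟩ : Fin k) ≠ ⟨k - 1, by omega⟩ := by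
      simp [Fin.ext_iff]; omega
    simp [hta, htb, hne2] at this
    omega
  have hsub : ({ta, tb} : Finset (Fin k → ℕ)) ⊆ pF k k := by
    intro t ht
    rcases Finset.mem_insert.mp ht with h | h
    · exact h ▸ hmem_a
    · exact (Finset.mem_singleton.mp h) ▸ hmem_b
  rw [h_eq]
  have hle := Finset.sum_le_sum_of_subset_of_nonneg
    (f := fun t : Fin k → ℕ => (1:ℝ) ^ (∑ i : Fin k, t i) / ∏ i : Fin k, (Nat.factorial (t i) : ℝ))
    hsub (fun t _ _ => term_nonneg (by norm_num) t)
  refine lt_of_lt_of_le ?_ hle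
  rw [Finset.sum_pair hne]
  have hfa : (0:ℝ) < ∏ i : Fin k, (Nat.factorial (ta i) : ℝ) :=
    Finset.prod_pos fun i _ => by positivity
  have hb1 : ∀ i : Fin k, Nat.factorial (tb i) = 1 := by
    intro i
    by_cases h : i = ⟨k - 1, by omega⟩ <;> simp [htb, h]
  have : (1:ℝ) ^ (∑ i : Fin k, tb i) / ∏ i : Fin k, (Nat.factorial (tb i) : ℝ) = 1 := by
    simp [hb1]
  rw [this]
  have hpos : (0:ℝ) < (1:ℝ) ^ (∑ i : Fin k, ta i) / ∏ i : Fin k, (Nat.factorial (ta i) : ℝ) := by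
    positivity
  linarith


private lemma sum_update_w {k : ℕ} (t : Fin k → ℕ) (i : Fin k) (v : ℕ) (w : Fin k → ℕ) :
    (∑ j : Fin k, w j * Function.update t i v j) + w i * t i
      = (∑ j : Fin k, w j * t j) + w i * v := by
  classical
  rw [Finset.sum_eq_sum_sdiff_singleton_add (Finset.mem_univ i),
      Finset.sum_eq_sum_sdiff_singleton_add (Finset.mem_univ i) (fun j => w j * t j)]
  have hcongr : ∀ j ∈ Finset.univ \ {i}, w j * Function.update t i v j = w j * t j := by
    intro j hj
    rw [Finset.mem_sdiff, Finset.mem_singleton] at hj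
    rw [Function.update_of_ne hj.2]
  rw [Finset.sum_congr rfl hcongr, Function.update_self]
  ring

private lemma prod_update_fact {k : ℕ} (t : Fin k → ℕ) (i : Fin k) (v : ℕ) :
    (∏ j : Fin k, Nat.factorial (Function.update t i v j)) * Nat.factorial (t i)
      = (∏ j : Fin k, Nat.factorial (t j)) * Nat.factorial v := by
  classical
  rw [Finset.prod_eq_prod_diff_singleton_mul (Finset.mem_univ i),
      Finset.prod_eq_prod_diff_singleton_mul (Finset.mem_univ i)
        (fun j => Nat.factorial (t j))]
  have hcongr : ∀ j ∈ Finset.univ \ {i},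
      Nat.factorial (Function.update t i v j) = Nat.factorial (t j) := by
    intro j hj
    rw [Finset.mem_sdiff, Finset.mem_singleton] at hj
    rw [Function.update_of_ne hj.2]
  rw [Finset.prod_congr rfl hcongr, Function.update_self]
  ring

private lemma S_eq {k : ℕ} {lam : ℝ} (hlam : 0 < lam) (n : ℕ) (i : Fin k)
    (hin : (i : ℕ) + 1 ≤ n) :
    ∑ t ∈ pF k n, (t i : ℝ) * (lam ^ (∑ j : Fin k, t j) / ∏ j : Fin k, (Nat.factorial (t j) : ℝ))
      = lam * poissonOrderH k (n - ((i : ℕ) + 1)) lam := by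
  classical
  rw [h_eq, Finset.mul_sum]
  rw [← Finset.sum_filter_of_ne (p := fun t : Fin k → ℕ => 1 ≤ t i)
      (fun t _ h => by by_contra hc; push_neg at hc; interval_cases h' : t i <;> simp_all)]
  refine Finset.sum_nbij' (fun t => Function.update t i (t i - 1))
    (fun u => Function.update u i (u i + 1)) ?_ ?_ ?_ ?_ ?_
  · -- maps into pF k (n - (i+1))
    intro t ht
    rw [Finset.mem_filter] at ht
    obtain ⟨htF, hti⟩ := ht
    rw [mem_pF] at htF ⊢
    have h1 := sum_update_w t i (t i - 1) (fun j => (j : ℕ) + 1)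
    rw [htF] at h1
    have h2 : ((i:ℕ)+1) * (t i - 1) + ((i:ℕ)+1) = ((i:ℕ)+1) * t i := by
      rw [← Nat.mul_succ]
      congr 1
      omega
    show (∑ j : Fin k, ((j:ℕ)+1) * Function.update t i (t i - 1) j) = n - ((i:ℕ)+1)
    refine Nat.eq_sub_of_add_eq ?_
    linarith [h1, h2]
  · -- inverse maps back
    intro u hu
    rw [mem_pF] at hu
    rw [Finset.mem_filter, mem_pF]
    have h1 := sum_update_w u i (u i + 1) (fun j => (j : ℕ) + 1)
    rw [hu] at h1
    constructor
    · have h2 : ((i:ℕ)+1) * (u i + 1) = ((i:ℕ)+1) * u i + ((i:ℕ)+1) := Nat.mul_succ _ _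
      have h3 : n - ((i:ℕ)+1) + ((i:ℕ)+1) = n := Nat.sub_add_cancel hin
      rw [h2] at h1
      show (∑ j : Fin k, ((j:ℕ)+1) * Function.update u i (u i + 1) j) = n
      linarith [h1, h3]
    · simp [Function.update_self]
  · intro t ht
    rw [Finset.mem_filter] at ht
    funext j
    by_cases hj : j = i
    · subst hj
      simp [Function.update_self]
      omega
    · simp [Function.update_of_ne hj]
  · intro u hu
    funext j
    by_cases hj : j = i
    · subst hj
      simp [Function.update_self]
    · simp [Function.update_of_ne hj]
  · -- term equality
    intro t ht
    rw [Finset.mem_filter] at ht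
    obtain ⟨htF, hti⟩ := ht
    set t' : Fin k → ℕ := Function.update t i (t i - 1) with ht'
    have hS : (∑ j : Fin k, t j) = (∑ j : Fin k, t' j) + 1 := by
      have h1 := sum_update_w t i (t i - 1) (fun _ => 1)
      simp only [one_mul] at h1
      rw [← ht'] at h1
      omega
    have hPn : (∏ j : Fin k, Nat.factorial (t j)) = (∏ j : Fin k, Nat.factorial (t' j)) * t i := by
      have h1 := prod_update_fact t i (t i - 1)
      rw [← ht'] at h1
      have h2 : Nat.factorial (t i) = t i * Nat.factorial (t i - 1) := by
        conv_lhs => rw [show t i = (t i - 1) + 1 by omega]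
        rw [Nat.factorial_succ]
        congr 1
        omega
      rw [h2] at h1
      have h3 := Nat.factorial_pos (t i - 1)
      refine (Nat.eq_of_mul_eq_mul_right h3 ?_).symm
      rw [mul_assoc]
      exact h1
    show (t i : ℝ) * (lam ^ (∑ j : Fin k, t j) / ∏ j : Fin k, (Nat.factorial (t j) : ℝ))
      = lam * (lam ^ (∑ j : Fin k, t' j) / ∏ j : Fin k, (Nat.factorial (t' j) : ℝ))
    have hPr : (∏ j : Fin k, (Nat.factorial (t j) : ℝ))
        = (∏ j : Fin k, (Nat.factorial (t' j) : ℝ)) * (t i : ℝ) := by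
      exact_mod_cast congrArg (fun x : ℕ => (x : ℝ)) hPn
    have h4 : (0:ℝ) < ∏ j : Fin k, (Nat.factorial (t' j) : ℝ) :=
      Finset.prod_pos fun j _ => by positivity
    have h5 : (0:ℝ) < (t i : ℝ) := by exact_mod_cast hti
    rw [hS, hPr, pow_succ]
    field_simp

private lemma S_zero {k : ℕ} {lam : ℝ} (n : ℕ) (i : Fin k) (hin : n < (i : ℕ) + 1) :
    ∑ t ∈ pF k n, (t i : ℝ) * (lam ^ (∑ j : Fin k, t j) / ∏ j : Fin k, (Nat.factorial (t j) : ℝ))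
      = 0 := by
  refine Finset.sum_eq_zero fun t ht => ?_
  rw [mem_pF] at ht
  have : t i = 0 := by
    by_contra hc
    have h1 : ((i:ℕ)+1) ≤ ((i:ℕ)+1) * t i := Nat.le_mul_of_pos_right _ (Nat.pos_of_ne_zero hc)
    have h2 : ((i:ℕ)+1) * t i ≤ ∑ j : Fin k, ((j:ℕ)+1) * t j :=
      Finset.single_le_sum (f := fun j : Fin k => ((j:ℕ)+1) * t j)
        (fun j _ => Nat.zero_le _) (Finset.mem_univ i)
    omega
  rw [this]
  simp

private lemma key_bound {k : ℕ} {lam : ℝ} (hlam : 0 < lam) (n : ℕ)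
    (hle : ∀ n' : ℕ, poissonOrderH k n' lam ≤ 1) :
    (n : ℝ) * poissonOrderH k n lam
      ≤ lam * ∑ i ∈ Finset.range (min k n), ((i : ℝ) + 1) := by
  have step1 : (n : ℝ) * poissonOrderH k n lam
      = ∑ i : Fin k, ((i : ℝ) + 1) *
          ∑ t ∈ pF k n, (t i : ℝ) *
            (lam ^ (∑ j : Fin k, t j) / ∏ j : Fin k, (Nat.factorial (t j) : ℝ)) := by
    rw [h_eq, Finset.mul_sum]
    have : ∀ t ∈ pF k n, (n : ℝ) *
        (lam ^ (∑ j : Fin k, t j) / ∏ j : Fin k, (Nat.factorial (t j) : ℝ))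
        = ∑ i : Fin k, ((i : ℝ) + 1) * (t i : ℝ) *
            (lam ^ (∑ j : Fin k, t j) / ∏ j : Fin k, (Nat.factorial (t j) : ℝ)) := by
      intro t ht
      rw [← Finset.sum_mul]
      congr 1
      rw [mem_pF] at ht
      rw [← ht]
      push_cast
      ring
    rw [Finset.sum_congr rfl this, Finset.sum_comm]
    congr 1
    funext i
    rw [Finset.mul_sum]
    congr 1
    funext t
    ring
  rw [step1]
  have step2 : ∀ i : Fin k,
      ((i : ℝ) + 1) * ∑ t ∈ pF k n, (t i : ℝ) *
          (lam ^ (∑ j : Fin k, t j) / ∏ j : Fin k, (Nat.factorial (t j) : ℝ))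
        ≤ ((i : ℝ) + 1) * (if (i : ℕ) + 1 ≤ n then lam else 0) := by
    intro i
    rcases le_or_gt ((i : ℕ) + 1) n with h | h
    · rw [if_pos h, S_eq hlam n i h]
      have := hle (n - ((i : ℕ) + 1))
      have hi1 : (0:ℝ) < (i : ℝ) + 1 := by positivity
      exact mul_le_mul_of_nonneg_left (mul_le_of_le_one_right hlam.le this) hi1.le
    · rw [if_neg (by omega), S_zero n i h]
  calc ∑ i : Fin k, ((i : ℝ) + 1) * _ ≤ ∑ i : Fin k, ((i : ℝ) + 1) * (if (i : ℕ) + 1 ≤ n then lam else 0) :=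
        Finset.sum_le_sum fun i _ => step2 i
    _ = ∑ i ∈ Finset.range k, ((i : ℝ) + 1) * (if i + 1 ≤ n then lam else 0) := by
        rw [Finset.sum_range fun i => ((i : ℝ) + 1) * (if i + 1 ≤ n then lam else 0)]
    _ = lam * ∑ i ∈ Finset.range (min k n), ((i : ℝ) + 1) := by
        rw [Finset.mul_sum]
        rw [← Finset.sum_filter_of_ne (p := fun i => i + 1 ≤ n)
          (fun i _ hne => by by_contra hc; simp [if_neg hc] at hne; exact hc hne.1)]
        have : (Finset.range k).filter (fun i => i + 1 ≤ n) = Finset.range (min k n) := by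
          ext j
          simp [Finset.mem_filter, Finset.mem_range]
        rw [this]
        refine Finset.sum_congr rfl fun j hj => ?_
        rw [Finset.mem_range] at hj
        rw [if_pos (by omega)]
        ring

private lemma gauss_aux : ∀ a : ℕ, (∑ i ∈ Finset.range a, (i + 1)) * 2 = a * (a + 1) := by
  intro a
  induction a with
  | zero => simp
  | succ b ih => rw [Finset.sum_range_succ, add_mul, ih]; ring

theorem stmt_7 (k : ℕ) (hk : 2 ≤ k) (lam : ℝ) (hlam : 0 < lam)
    (m : ℕ) (hm : 1 ≤ m) (h0 : IsMode k lam 0) (hmm : IsMode k lam m)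
    (r : ℝ) (hr : 0 < r) (hroot : poissonOrderH k k r = 1) :
    2 / ((k : ℝ) + 1) ≤ lam ∧ lam ≤ r ∧ r < 1 := by
  have hk0 : 0 < k := by omega
  have hexp : 0 < Real.exp (-(k * lam)) := Real.exp_pos _
  -- every h value is at most 1
  have hH1 : ∀ n' : ℕ, poissonOrderH k n' lam ≤ 1 := by
    intro n'
    have := h0 n'
    rw [poissonOrderPmf, poissonOrderPmf, h_zero, mul_one] at this
    calc poissonOrderH k n' lam
        = Real.exp (-(k * lam)) * poissonOrderH k n' lam / Real.exp (-(k * lam)) := by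
          field_simp
      _ ≤ Real.exp (-(k * lam)) / Real.exp (-(k * lam)) := by
          apply div_le_div_of_nonneg_right this hexp.le
      _ = 1 := by field_simp
  -- h at m equals 1
  have hHm : poissonOrderH k m lam = 1 := by
    refine le_antisymm (hH1 m) ?_
    have := hmm 0
    rw [poissonOrderPmf, poissonOrderPmf, h_zero, mul_one] at this
    calc (1:ℝ) = Real.exp (-(k * lam)) / Real.exp (-(k * lam)) := by field_simp
      _ ≤ Real.exp (-(k * lam)) * poissonOrderH k m lam / Real.exp (-(k * lam)) := by
          apply div_le_div_of_nonneg_right this hexp.le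
      _ = poissonOrderH k m lam := by field_simp
  -- lam ≤ r
  have hlr : lam ≤ r := by
    by_contra hc
    push_neg at hc
    have := h_strict_mono hr.le hc hk0 (by omega : 1 ≤ k)
    rw [hroot] at this
    exact absurd (lt_of_lt_of_le this (hH1 k)) (lt_irrefl 1)
  -- r < 1
  have hr1 : r < 1 := by
    by_contra hc
    push_neg at hc
    have h1 := h_mono (by norm_num) hc k k
    rw [hroot] at h1
    exact absurd (lt_of_lt_of_le (one_lt_h_one hk) h1) (lt_irrefl 1)
  -- lower bound
  refine ⟨?_, hlr, hr1⟩
  have hkey := key_bound hlam m hH1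
  rw [hHm, mul_one] at hkey
  set j := min k m with hj
  have hjm : j ≤ m := min_le_right _ _
  have hjk : j ≤ k := min_le_left _ _
  have hN : (∑ i ∈ Finset.range j, (i + 1)) * 2 = j * (j + 1) := gauss_aux j
  have hsumR : (∑ i ∈ Finset.range j, ((i : ℝ) + 1)) * 2 = (j : ℝ) * ((j : ℝ) + 1) := by
    exact_mod_cast congrArg (fun x : ℕ => (x : ℝ)) hN
  have hmul : (j : ℝ) * ((j : ℝ) + 1) ≤ (m : ℝ) * ((k : ℝ) + 1) := by
    have : j * (j + 1) ≤ m * (k + 1) := Nat.mul_le_mul hjm (by omega)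
    exact_mod_cast this
  have h2m : 2 * (m : ℝ) ≤ lam * ((m : ℝ) * ((k : ℝ) + 1)) := by
    have := mul_le_mul_of_nonneg_right hkey (by norm_num : (0:ℝ) ≤ 2)
    calc 2 * (m : ℝ) ≤ lam * ((j : ℝ) * ((j : ℝ) + 1)) := by
          rw [← hsumR]; nlinarith [hkey]
      _ ≤ lam * ((m : ℝ) * ((k : ℝ) + 1)) := by
          exact mul_le_mul_of_nonneg_left hmul hlam.le
  have hmpos : (0:ℝ) < (m : ℝ) := by exact_mod_cast hm
  have hk1 : (0:ℝ) < (k : ℝ) + 1 := by positivity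
  rw [div_le_iff₀ hk1]
  have : 2 * (m : ℝ) ≤ lam * ((k : ℝ) + 1) * (m : ℝ) := by
    calc 2 * (m : ℝ) ≤ lam * ((m : ℝ) * ((k : ℝ) + 1)) := h2m
      _ = lam * ((k : ℝ) + 1) * (m : ℝ) := by ring
  nlinarith [this, hmpos]
end

section
/- For every integer k ≥ 1 and every real λ > 0, every mode m of the Poisson distribution of order k with parameter λ satisfies ⌊κλ⌋ − κ + 1 − δ_{k,1} ≤ m ≤ ⌊κλ⌋, where κ = k(k+1)/2 and δ_{k,1} equals 1 if k = 1 and 0 otherwise. -/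
open Finset

namespace POaux

variable (k : ℕ) (lam : ℝ)

def T (n : ℕ) : Finset (Fin k → ℕ) :=
  (Fintype.piFinset fun _ : Fin k => Finset.range (n + 1)).filter
      (fun t => ∑ i : Fin k, ((i : ℕ) + 1) * t i = n)

noncomputable def w (t : Fin k → ℕ) : ℝ :=
  lam ^ (∑ i : Fin k, t i) / ∏ i : Fin k, (Nat.factorial (t i) : ℝ)

lemma mem_T {n : ℕ} {t : Fin k → ℕ} :
    t ∈ T k n ↔ ∑ i : Fin k, ((i : ℕ) + 1) * t i = n := by
  constructor
  · intro h
    exact (Finset.mem_filter.mp h).2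
  · intro h
    refine Finset.mem_filter.mpr ⟨Fintype.mem_piFinset.mpr fun i => ?_, h⟩
    rw [Finset.mem_range, Nat.lt_succ_iff]
    calc t i ≤ ((i : ℕ) + 1) * t i := Nat.le_mul_of_pos_left _ (Nat.succ_pos _)
    _ ≤ ∑ j : Fin k, ((j : ℕ) + 1) * t j :=
        Finset.single_le_sum (f := fun j : Fin k => ((j : ℕ) + 1) * t j)
          (fun j _ => Nat.zero_le _) (Finset.mem_univ i)
    _ = n := h

lemma w_pos (hlam : 0 < lam) (t : Fin k → ℕ) : 0 < w k lam t := by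
  apply div_pos (pow_pos hlam _)
  exact Finset.prod_pos fun i _ => by positivity

lemma key_split (t : Fin k → ℕ) (c : Fin k) (v : ℕ) :
    ∑ j : Fin k, ((j : ℕ) + 1) * (Function.update t c v) j + ((c : ℕ) + 1) * t c
      = ∑ j : Fin k, ((j : ℕ) + 1) * t j + ((c : ℕ) + 1) * v := by
  have h1 : ∑ j ∈ Finset.univ.erase c, ((j : ℕ) + 1) * (Function.update t c v) j
      = ∑ j ∈ Finset.univ.erase c, ((j : ℕ) + 1) * t j := by
    refine Finset.sum_congr rfl fun j hj => ?_
    rw [Function.update_of_ne (Finset.mem_erase.mp hj).1]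
  have h2 := Finset.sum_erase_add Finset.univ
    (fun j : Fin k => ((j : ℕ) + 1) * (Function.update t c v) j) (Finset.mem_univ c)
  have h3 := Finset.sum_erase_add Finset.univ
    (fun j : Fin k => ((j : ℕ) + 1) * t j) (Finset.mem_univ c)
  rw [← h2, ← h3, h1]
  simp only [Function.update_self]
  ring

lemma sum_shift (c : Fin k) (n : ℕ) (F : (Fin k → ℕ) → ℝ) :
    ∑ t ∈ (T k (n + ((c : ℕ) + 1))).filter (fun t => t c ≠ 0), F t
      = ∑ t ∈ T k n, F (Function.update t c (t c + 1)) := by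
  refine Finset.sum_bij' (fun t _ => Function.update t c (t c - 1))
    (fun t _ => Function.update t c (t c + 1)) ?_ ?_ ?_ ?_ ?_
  · intro a ha
    obtain ⟨haT, hac⟩ := Finset.mem_filter.mp ha
    rw [mem_T] at haT
    obtain ⟨u, hu⟩ : ∃ u, a c = u + 1 := ⟨a c - 1, by omega⟩
    beta_reduce
    rw [mem_T, hu, Nat.add_sub_cancel]
    have hs := key_split k a c u
    rw [hu, Nat.mul_succ] at hs
    omega
  · intro a ha
    rw [mem_T] at ha
    refine Finset.mem_filter.mpr ⟨?_, ?_⟩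
    · beta_reduce
      rw [mem_T]
      have hs := key_split k a c (a c + 1)
      rw [Nat.mul_succ] at hs
      omega
    · simp [Function.update_self]
  · intro a ha
    obtain ⟨haT, hac⟩ := Finset.mem_filter.mp ha
    simp only [Function.update_idem, Function.update_self]
    rw [Nat.sub_add_cancel (Nat.one_le_iff_ne_zero.mpr hac), Function.update_eq_self]
  · intro a ha
    simp only [Function.update_idem, Function.update_self]
    rw [Nat.add_sub_cancel, Function.update_eq_self]
  · intro a ha
    obtain ⟨haT, hac⟩ := Finset.mem_filter.mp ha
    simp only [Function.update_idem, Function.update_self]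
    rw [Nat.sub_add_cancel (Nat.one_le_iff_ne_zero.mpr hac), Function.update_eq_self]

lemma w_update (hlam : 0 < lam) (t : Fin k → ℕ) (c : Fin k) :
    w k lam (Function.update t c (t c + 1)) = lam * w k lam t / ((t c : ℝ) + 1) := by
  have hsum : ∑ j : Fin k, (Function.update t c (t c + 1)) j = (∑ j : Fin k, t j) + 1 := by
    rw [Finset.sum_update_of_mem (Finset.mem_univ c)]
    have h := Finset.sum_erase_add Finset.univ t (Finset.mem_univ c)
    rw [Finset.sdiff_singleton_eq_erase]
    omega
  have hprod : ∏ j : Fin k, (Nat.factorial ((Function.update t c (t c + 1)) j) : ℝ)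
      = (((t c) : ℝ) + 1) * ∏ j : Fin k, (Nat.factorial (t j) : ℝ) := by
    have e1 : ∏ j ∈ Finset.univ.erase c,
          (Nat.factorial ((Function.update t c (t c + 1)) j) : ℝ)
        = ∏ j ∈ Finset.univ.erase c, (Nat.factorial (t j) : ℝ) := by
      refine Finset.prod_congr rfl fun j hj => ?_
      rw [Function.update_of_ne (Finset.mem_erase.mp hj).1]
    have e2 := Finset.prod_erase_mul Finset.univ
      (fun j : Fin k => (Nat.factorial ((Function.update t c (t c + 1)) j) : ℝ))
      (Finset.mem_univ c)
    have e3 := Finset.prod_erase_mul Finset.univ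
      (fun j : Fin k => (Nat.factorial (t j) : ℝ)) (Finset.mem_univ c)
    rw [← e2, e1]
    simp only [Function.update_self]
    rw [Nat.factorial_succ, ← e3]
    push_cast
    ring
  unfold w
  rw [hsum, hprod]
  have hfc : (0:ℝ) < ∏ j : Fin k, (Nat.factorial (t j) : ℝ) :=
    Finset.prod_pos fun i _ => by positivity
  have h1 : ((t c : ℝ) + 1) ≠ 0 := by positivity
  rw [pow_succ]
  field_simp

end POaux

namespace POaux

variable (k : ℕ) (lam : ℝ)

/-- Cauchy–Schwarz in the form we need. -/
lemma cs {α : Type*} (s : Finset α) (a b : α → ℝ) (ha : ∀ x ∈ s, 0 ≤ a x)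
    (hb : ∀ x ∈ s, 0 < b x) :
    (∑ x ∈ s, a x) ^ 2 ≤ (∑ x ∈ s, a x / b x) * ∑ x ∈ s, a x * b x := by
  have key := Finset.sum_mul_sq_le_sq_mul_sq s (fun x => Real.sqrt (a x / b x))
    (fun x => Real.sqrt (a x * b x))
  have e1 : ∑ x ∈ s, Real.sqrt (a x / b x) * Real.sqrt (a x * b x) = ∑ x ∈ s, a x := by
    refine Finset.sum_congr rfl fun x hx => ?_
    rw [← Real.sqrt_mul (div_nonneg (ha x hx) (hb x hx).le)]
    have : a x / b x * (a x * b x) = a x ^ 2 := by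
      have hbx := (hb x hx).ne'
      field_simp
    rw [this, Real.sqrt_sq (ha x hx)]
  have e2 : ∑ x ∈ s, Real.sqrt (a x / b x) ^ 2 = ∑ x ∈ s, a x / b x := by
    refine Finset.sum_congr rfl fun x hx => ?_
    exact Real.sq_sqrt (div_nonneg (ha x hx) (hb x hx).le)
  have e3 : ∑ x ∈ s, Real.sqrt (a x * b x) ^ 2 = ∑ x ∈ s, a x * b x := by
    refine Finset.sum_congr rfl fun x hx => ?_
    exact Real.sq_sqrt (mul_nonneg (ha x hx) (hb x hx).le)
  rw [e1, e2, e3] at key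
  exact key

/-- The first-moment identity at shifted level. -/
lemma moment (hlam : 0 < lam) (c : Fin k) (n : ℕ) :
    ∑ t ∈ T k (n + ((c : ℕ) + 1)), (t c : ℝ) * w k lam t
      = lam * ∑ t ∈ T k n, w k lam t := by
  rw [← Finset.sum_filter_of_ne (p := fun t => t c ≠ 0)
      (by intro t _ h hc; exact h (by rw [hc]; simp))]
  rw [sum_shift k c n (fun t => (t c : ℝ) * w k lam t)]
  rw [Finset.mul_sum]
  refine Finset.sum_congr rfl fun t ht => ?_
  rw [Function.update_self, w_update k lam hlam t c]
  have h1 : ((t c : ℝ) + 1) ≠ 0 := by positivity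
  push_cast
  field_simp

/-- The first-moment identity with an `if`. -/
lemma moment_if (hlam : 0 < lam) (c : Fin k) (n : ℕ) :
    ∑ t ∈ T k n, (t c : ℝ) * w k lam t
      = if ((c : ℕ) + 1) ≤ n then lam * ∑ t ∈ T k (n - ((c : ℕ) + 1)), w k lam t
        else 0 := by
  split_ifs with h
  · have hn : n = (n - ((c : ℕ) + 1)) + ((c : ℕ) + 1) := by omega
    conv_lhs => rw [hn]
    rw [moment k lam hlam c (n - ((c : ℕ) + 1))]
  · refine Finset.sum_eq_zero fun t ht => ?_
    rw [mem_T] at ht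
    have htc : ((c : ℕ) + 1) * t c ≤ n := by
      rw [← ht]
      exact Finset.single_le_sum (f := fun j : Fin k => ((j : ℕ) + 1) * t j)
        (fun j _ => Nat.zero_le _) (Finset.mem_univ c)
    have : t c = 0 := by
      by_contra hc
      have : ((c : ℕ) + 1) ≤ ((c : ℕ) + 1) * t c :=
        Nat.le_mul_of_pos_right _ (Nat.pos_of_ne_zero hc)
      omega
    rw [this]
    simp

/-- The recurrence in raw form. -/
lemma recurrence (n : ℕ) :
    (n : ℝ) * ∑ t ∈ T k n, w k lam t
      = ∑ c : Fin k, ((c : ℕ) + 1 : ℝ) * ∑ t ∈ T k n, (t c : ℝ) * w k lam t := by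
  have : ∀ c : Fin k, ((c : ℕ) + 1 : ℝ) * ∑ t ∈ T k n, (t c : ℝ) * w k lam t
      = ∑ t ∈ T k n, (((c : ℕ) + 1 : ℝ) * (t c : ℝ)) * w k lam t := by
    intro c
    rw [Finset.mul_sum]
    exact Finset.sum_congr rfl fun t _ => by ring
  simp only [this]
  rw [Finset.sum_comm]
  rw [Finset.mul_sum]
  refine Finset.sum_congr rfl fun t ht => ?_
  rw [← Finset.sum_mul]
  congr 1
  rw [mem_T] at ht
  have : ((n : ℕ) : ℝ) = ((∑ i : Fin k, ((i : ℕ) + 1) * t i : ℕ) : ℝ) := by rw [ht]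
  rw [this]
  push_cast
  rfl

/-- Positivity of the level sums. -/
lemma S_pos (hk : 1 ≤ k) (hlam : 0 < lam) (n : ℕ) :
    0 < ∑ t ∈ T k n, w k lam t := by
  set t0 : Fin k → ℕ := fun j => if j = ⟨0, hk⟩ then n else 0 with ht0
  have hmem : t0 ∈ T k n := by
    rw [mem_T]
    rw [Finset.sum_eq_single (⟨0, hk⟩ : Fin k)]
    · simp [ht0]
    · intro j _ hj
      simp [ht0, hj]
    · intro h; exact absurd (Finset.mem_univ _) h
  refine Finset.sum_pos' (fun t _ => (w_pos k lam hlam t).le) ⟨t0, hmem, w_pos k lam hlam t0⟩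

end POaux

namespace POaux

set_option maxHeartbeats 1600000 in
lemma bounds (k : ℕ) (lam : ℝ) (hk : 1 ≤ k) (hlam : 0 < lam) (m : ℕ)
    (hmode : ∀ n, (∑ t ∈ T k n, w k lam t) ≤ ∑ t ∈ T k m, w k lam t) :
    ((m : ℝ) ≤ (∑ c : Fin k, ((c : ℕ) + 1 : ℝ)) * lam) ∧
    ((∑ c : Fin k, ((c : ℕ) + 1 : ℝ)) * lam ≤ (m : ℝ) + ∑ c : Fin k, ((c : ℕ) + 1 : ℝ)) ∧
    (2 ≤ k → (∑ c : Fin k, ((c : ℕ) + 1 : ℝ)) * lam < (m : ℝ) + ∑ c : Fin k, ((c : ℕ) + 1 : ℝ)) := by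
  have hFin : Nonempty (Fin k) := ⟨⟨0, hk⟩⟩
  set K : ℝ := ∑ c : Fin k, ((c : ℕ) + 1 : ℝ) with hK
  set Sm : ℝ := ∑ t ∈ T k m, w k lam t with hSm
  have hSmpos : 0 < Sm := S_pos k lam hk hlam m
  have hKpos : 0 < K := by
    refine Finset.sum_pos (fun c _ => by positivity) ⟨⟨0, hk⟩, Finset.mem_univ _⟩
  set Mc : Fin k → ℝ := fun c => ∑ t ∈ T k m, (t c : ℝ) * w k lam t with hMc
  set Dc : Fin k → ℝ := fun c => ∑ t ∈ T k m, ((t c : ℝ) + 1) * w k lam t with hDc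
  have hD : ∀ c, Dc c = Mc c + Sm := by
    intro c
    simp only [hDc, hMc, hSm, add_mul, one_mul, Finset.sum_add_distrib]
  have hDpos : ∀ c, 0 < Dc c := by
    intro c
    rw [hD c]
    have hMnonneg : 0 ≤ Mc c :=
      Finset.sum_nonneg fun t _ => mul_nonneg (by positivity) (w_pos k lam hlam t).le
    linarith
  have hrec : (m : ℝ) * Sm = ∑ c : Fin k, ((c : ℕ) + 1 : ℝ) * Mc c := recurrence k lam m
  -- upper bound
  have hMle : ∀ c, Mc c ≤ lam * Sm := by
    intro c
    simp only [hMc]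
    beta_reduce
    rw [moment_if k lam hlam c m]
    split_ifs with h
    · have := hmode (m - ((c : ℕ) + 1))
      have hl := hlam.le
      nlinarith
    · positivity
  have hupper : (m : ℝ) ≤ K * lam := by
    have h1 : (m : ℝ) * Sm ≤ K * lam * Sm := by
      rw [hrec]
      have : K * lam * Sm = ∑ c : Fin k, ((c : ℕ) + 1 : ℝ) * (lam * Sm) := by
        rw [← Finset.sum_mul, ← hK]; ring
      rw [this]
      exact Finset.sum_le_sum fun c _ => by
        have := hMle c
        have hc : (0:ℝ) ≤ (c : ℕ) + 1 := by positivity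
        nlinarith
    exact le_of_mul_le_mul_right h1 hSmpos
  -- lower bound machinery
  set Ec : Fin k → ℝ := fun c =>
    ∑ t ∈ (T k (m + ((c : ℕ) + 1))).filter (fun t => t c ≠ 0), w k lam t with hEc
  set Qc : Fin k → ℝ := fun c =>
    ∑ t ∈ (T k (m + ((c : ℕ) + 1))).filter (fun t => ¬ t c ≠ 0), w k lam t with hQc
  have hQnonneg : ∀ c, 0 ≤ Qc c := by
    intro c
    exact Finset.sum_nonneg fun t _ => (w_pos k lam hlam t).le
  have hEQ : ∀ c, Ec c + Qc c = ∑ t ∈ T k (m + ((c : ℕ) + 1)), w k lam t := by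
    intro c
    exact Finset.sum_filter_add_sum_filter_not _ _ _
  have hEle : ∀ c, Ec c ≤ Sm - Qc c := by
    intro c
    have := hmode (m + ((c : ℕ) + 1))
    have := hEQ c
    linarith
  have hEeq : ∀ c, Ec c = lam * ∑ t ∈ T k m, w k lam t / ((t c : ℝ) + 1) := by
    intro c
    simp only [hEc]
    beta_reduce
    rw [sum_shift k c m (w k lam)]
    rw [Finset.mul_sum]
    refine Finset.sum_congr rfl fun t ht => ?_
    rw [w_update k lam hlam t c, mul_div_assoc]
  have hCS1 : ∀ c, lam * Sm ^ 2 ≤ Ec c * Dc c := by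
    intro c
    have hcs := cs (T k m) (w k lam) (fun t => (t c : ℝ) + 1)
      (fun t _ => (w_pos k lam hlam t).le) (fun t _ => by positivity)
    rw [hEeq c]
    calc lam * Sm ^ 2 ≤ lam * ((∑ t ∈ T k m, w k lam t / ((t c : ℝ) + 1)) *
          ∑ t ∈ T k m, w k lam t * ((t c : ℝ) + 1)) := by
          rw [hSm]
          have := mul_le_mul_of_nonneg_left hcs hlam.le
          linarith
    _ = lam * (∑ t ∈ T k m, w k lam t / ((t c : ℝ) + 1)) * Dc c := by
          rw [hDc]
          have : ∑ t ∈ T k m, w k lam t * ((t c : ℝ) + 1)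
              = ∑ t ∈ T k m, ((t c : ℝ) + 1) * w k lam t :=
            Finset.sum_congr rfl fun t _ => by ring
          rw [this]; ring
  have hperc : ∀ c, lam * Sm ^ 2 / Dc c ≤ Sm - Qc c := by
    intro c
    rw [div_le_iff₀ (hDpos c)]
    calc lam * Sm ^ 2 ≤ Ec c * Dc c := hCS1 c
    _ ≤ (Sm - Qc c) * Dc c := by
        have := hEle c; have := (hDpos c).le; nlinarith
  -- weighted sum over c
  have hDsum : ∑ c : Fin k, ((c : ℕ) + 1 : ℝ) * Dc c = ((m : ℝ) + K) * Sm := by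
    have : ∀ c : Fin k, ((c : ℕ) + 1 : ℝ) * Dc c
        = ((c : ℕ) + 1 : ℝ) * Mc c + ((c : ℕ) + 1 : ℝ) * Sm := by
      intro c; rw [hD c]; ring
    simp only [this]
    rw [Finset.sum_add_distrib, ← Finset.sum_mul, ← hK, ← hrec]
    ring
  have hCS2 : K ^ 2 ≤ (∑ c : Fin k, ((c : ℕ) + 1 : ℝ) / Dc c) * (((m : ℝ) + K) * Sm) := by
    have hcs := cs Finset.univ (fun c : Fin k => ((c : ℕ) + 1 : ℝ)) Dc
      (fun c _ => by positivity) (fun c _ => hDpos c)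
    rw [← hDsum]
    have : ∑ c : Fin k, ((c : ℕ) + 1 : ℝ) * Dc c
        = ∑ x : Fin k, (fun c : Fin k => ((c : ℕ) + 1 : ℝ)) x * Dc x := rfl
    rw [hK]
    exact hcs
  set clast : Fin k := ⟨k - 1, by omega⟩ with hclast
  have hclastval : ((clast : ℕ) + 1 : ℝ) = (k : ℝ) := by
    have h1 : (clast : ℕ) = k - 1 := rfl
    have h2 : k - 1 + 1 = k := by omega
    rw [h1]
    exact_mod_cast h2
  have hQsum : (k : ℝ) * Qc clast ≤ ∑ c : Fin k, ((c : ℕ) + 1 : ℝ) * Qc c := by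
    rw [← hclastval]
    exact Finset.single_le_sum (f := fun c : Fin k => ((c : ℕ) + 1 : ℝ) * Qc c)
      (fun c _ => mul_nonneg (by positivity) (hQnonneg c)) (Finset.mem_univ clast)
  have hmaster : lam * K ^ 2 * Sm / ((m : ℝ) + K) + (k : ℝ) * Qc clast ≤ K * Sm := by
    have hmK : (0 : ℝ) < (m : ℝ) + K := by positivity
    have hsum1 : ∑ c : Fin k, ((c : ℕ) + 1 : ℝ) * (lam * Sm ^ 2 / Dc c)
        ≤ K * Sm - (k : ℝ) * Qc clast := by
      calc ∑ c : Fin k, ((c : ℕ) + 1 : ℝ) * (lam * Sm ^ 2 / Dc c)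
          ≤ ∑ c : Fin k, ((c : ℕ) + 1 : ℝ) * (Sm - Qc c) := by
            refine Finset.sum_le_sum fun c _ => ?_
            have := hperc c
            have hc : (0:ℝ) ≤ (c : ℕ) + 1 := by positivity
            nlinarith
      _ = K * Sm - ∑ c : Fin k, ((c : ℕ) + 1 : ℝ) * Qc c := by
            simp only [mul_sub]
            rw [Finset.sum_sub_distrib, ← Finset.sum_mul]
      _ ≤ K * Sm - (k : ℝ) * Qc clast := by linarith [hQsum]
    have hsum2 : lam * K ^ 2 * Sm / ((m : ℝ) + K)
        ≤ ∑ c : Fin k, ((c : ℕ) + 1 : ℝ) * (lam * Sm ^ 2 / Dc c) := by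
      have he : ∑ c : Fin k, ((c : ℕ) + 1 : ℝ) * (lam * Sm ^ 2 / Dc c)
          = lam * Sm ^ 2 * ∑ c : Fin k, ((c : ℕ) + 1 : ℝ) / Dc c := by
        rw [Finset.mul_sum]
        refine Finset.sum_congr rfl fun c _ => ?_
        ring
      rw [he]
      have h2 : K ^ 2 / (((m : ℝ) + K) * Sm) ≤ ∑ c : Fin k, ((c : ℕ) + 1 : ℝ) / Dc c := by
        rw [div_le_iff₀ (by positivity)]
        exact hCS2
      calc lam * K ^ 2 * Sm / ((m : ℝ) + K)
          = lam * Sm ^ 2 * (K ^ 2 / (((m : ℝ) + K) * Sm)) := by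
            have hne1 : ((m : ℝ) + K) ≠ 0 := by positivity
            have hne2 : Sm ≠ 0 := hSmpos.ne'
            field_simp
      _ ≤ lam * Sm ^ 2 * ∑ c : Fin k, ((c : ℕ) + 1 : ℝ) / Dc c := by
            have : (0:ℝ) ≤ lam * Sm ^ 2 := by positivity
            exact mul_le_mul_of_nonneg_left h2 this
    linarith
  have hlow_le : K * lam ≤ (m : ℝ) + K := by
    have hmK : (0 : ℝ) < (m : ℝ) + K := by positivity
    have h1 : lam * K ^ 2 * Sm / ((m : ℝ) + K) ≤ K * Sm := by
      have := hQnonneg clast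
      have hkr : (0:ℝ) ≤ (k : ℝ) := by positivity
      nlinarith [hmaster]
    rw [div_le_iff₀ hmK] at h1
    have hKS : (0:ℝ) < K * Sm := by positivity
    nlinarith
  refine ⟨hupper, hlow_le, ?_⟩
  intro hk2
  -- strict: Qc clast > 0
  have hQpos : 0 < Qc clast := by
    set t0 : Fin k → ℕ := fun j => if j = ⟨0, hk⟩ then m + ((clast : ℕ) + 1) else 0 with ht0
    have hmem : t0 ∈ (T k (m + ((clast : ℕ) + 1))).filter (fun t => ¬ t clast ≠ 0) := by
      refine Finset.mem_filter.mpr ⟨?_, ?_⟩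
      · rw [mem_T]
        rw [Finset.sum_eq_single (⟨0, hk⟩ : Fin k)]
        · simp [ht0]
        · intro j _ hj
          simp [ht0, hj]
        · intro h; exact absurd (Finset.mem_univ _) h
      · simp only [ht0]
        have : clast ≠ (⟨0, hk⟩ : Fin k) := by
          intro h
          have : k - 1 = 0 := congrArg Fin.val h
          omega
        simp [this]
    calc (0:ℝ) < w k lam t0 := w_pos k lam hlam t0
    _ ≤ Qc clast := Finset.single_le_sum (f := fun t => w k lam t)
        (fun t _ => (w_pos k lam hlam t).le) hmem
  have hmK : (0 : ℝ) < (m : ℝ) + K := by positivity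
  have h1 : lam * K ^ 2 * Sm / ((m : ℝ) + K) < K * Sm := by
    have hkr : (1:ℝ) ≤ (k : ℝ) := by exact_mod_cast hk
    nlinarith [hmaster]
  rw [div_lt_iff₀ hmK] at h1
  have hKS : (0:ℝ) < K * Sm := by positivity
  nlinarith

end POaux

namespace POaux

lemma K_eq_nat (k : ℕ) :
    ∑ c : Fin k, ((c : ℕ) + 1 : ℝ) = ((k * (k + 1) / 2 : ℕ) : ℝ) := by
  have h1 : ∑ c : Fin k, ((c : ℕ) + 1) = k * (k + 1) / 2 := by
    have h2 : (∑ c : Fin k, ((c : ℕ) + 1)) * 2 = k * (k + 1) := by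
      rw [Fin.sum_univ_eq_sum_range (fun i => i + 1) k]
      induction k with
      | zero => simp
      | succ n ih =>
        rw [Finset.sum_range_succ, add_mul, ih]
        have : (n + 1) * (n + 1 + 1) = n * (n + 1) + 2 * (n + 1) := by ring
        omega
    omega
  rw [← h1]
  push_cast
  rfl

end POaux

theorem stmt_11 (k : ℕ) (hk : 1 ≤ k) (lam : ℝ) (hlam : 0 < lam)
    (m : ℕ) (hm : IsMode k lam m) :
    ⌊((k * (k + 1) / 2 : ℕ) : ℝ) * lam⌋ - (k * (k + 1) / 2 : ℕ) + 1
        - (if k = 1 then 1 else 0) ≤ (m : ℤ) ∧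
    (m : ℤ) ≤ ⌊((k * (k + 1) / 2 : ℕ) : ℝ) * lam⌋ := by
  have hH : ∀ n, poissonOrderH k n lam = ∑ t ∈ POaux.T k n, POaux.w k lam t := fun n => rfl
  have hmodeH : ∀ n, (∑ t ∈ POaux.T k n, POaux.w k lam t)
      ≤ ∑ t ∈ POaux.T k m, POaux.w k lam t := by
    intro n
    have h1 := hm n
    unfold poissonOrderPmf at h1
    have hexp : 0 < Real.exp (-(k * lam)) := Real.exp_pos _
    have h2 : poissonOrderH k n lam ≤ poissonOrderH k m lam :=
      le_of_mul_le_mul_left h1 hexp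
    rw [← hH n, ← hH m]
    exact h2
  obtain ⟨hup, hle, hlt⟩ := POaux.bounds k lam hk hlam m hmodeH
  rw [POaux.K_eq_nat k] at hup hle hlt
  set κn : ℕ := k * (k + 1) / 2 with hκ
  constructor
  · by_cases hk1 : k = 1
    · have hκ1 : κn = 1 := by subst hk1; rfl
      have hlam_le : ((κn : ℝ)) * lam ≤ (m : ℝ) + κn := hle
      have hfl : ⌊((κn : ℕ) : ℝ) * lam⌋ ≤ (m : ℤ) + κn := by
        have := Int.floor_le_floor (R := ℝ) hlam_le
        rw [show ((m : ℝ) + κn) = (((m : ℤ) + κn : ℤ) : ℝ) by push_cast; ring] at this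
        rw [Int.floor_intCast] at this
        exact le_trans this (le_refl _)
      rw [if_pos hk1]
      omega
    · have hstrict : ((κn : ℕ) : ℝ) * lam < (m : ℝ) + κn := hlt (by omega)
      have hfl : ⌊((κn : ℕ) : ℝ) * lam⌋ < (m : ℤ) + κn := by
        rw [Int.floor_lt]
        rw [show (((m : ℤ) + κn : ℤ) : ℝ) = (m : ℝ) + κn by push_cast; ring]
        exact hstrict
      simp only [if_neg hk1]
      omega
  · rw [Int.le_floor]
    push_cast
    exact hup
end

section
/- For every integer k ≥ 1 and every real λ > 0, the mean of the Poisson distribution of order k with parameter λ equals κλ: the series Σ_{n=0}^{∞} n·f_k(n;λ) converges and its sum is k(k+1)λ/2. -/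
section Aux

open Finset

/-- Sum over a pi type of a product of one-variable functions. -/
lemma pi_hasSum_prod : ∀ (m : ℕ) (a : Fin m → ℕ → ℝ) (b : Fin m → ℝ),
    (∀ j n, 0 ≤ a j n) → (∀ j, HasSum (a j) (b j)) →
    HasSum (fun t : Fin m → ℕ => ∏ j, a j (t j)) (∏ j, b j) := by
  intro m
  induction m with
  | zero =>
    intro a b _ _
    simpa using hasSum_unique (fun _ : Fin 0 → ℕ => (1 : ℝ))
  | succ m ih =>
    intro a b h0 h
    have htail := ih (fun j => a j.succ) (fun j => b j.succ)
      (fun j n => h0 _ _) (fun j => h j.succ)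
    have hsummable : Summable (fun p : ℕ × (Fin m → ℕ) =>
        a 0 p.1 * ∏ j : Fin m, a j.succ (p.2 j)) :=
      Summable.mul_of_nonneg (f := a 0)
        (g := fun s : Fin m → ℕ => ∏ j : Fin m, a j.succ (s j))
        (h 0).summable htail.summable
        (fun n => h0 0 n) (fun t => Finset.prod_nonneg fun j _ => h0 _ _)
    have hmul : HasSum (fun p : ℕ × (Fin m → ℕ) => a 0 p.1 * ∏ j : Fin m, a j.succ (p.2 j))
        (b 0 * ∏ j : Fin m, b j.succ) :=
      HasSum.mul (f := a 0) (g := fun s : Fin m → ℕ => ∏ j : Fin m, a j.succ (s j))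
        (h 0) htail hsummable
    have hkey := ((Fin.consEquiv fun _ : Fin (m + 1) => ℕ).symm.hasSum_iff
      (f := fun p : ℕ × (Fin m → ℕ) => a 0 p.1 * ∏ j : Fin m, a j.succ (p.2 j))
      (a := b 0 * ∏ j : Fin m, b j.succ)).mpr hmul
    have heq : (fun t : Fin (m + 1) → ℕ => ∏ j, a j (t j))
        = (fun p : ℕ × (Fin m → ℕ) => a 0 p.1 * ∏ j : Fin m, a j.succ (p.2 j))
            ∘ (Fin.consEquiv fun _ : Fin (m + 1) => ℕ).symm := by
      funext t
      simp [Fin.prod_univ_succ, Fin.tail]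
    rw [Fin.prod_univ_succ, heq]
    exact hkey

lemma hasSum_exp_div (lam : ℝ) :
    HasSum (fun n : ℕ => lam ^ n / (Nat.factorial n : ℝ)) (Real.exp lam) := by
  rw [Real.exp_eq_exp_ℝ]
  exact NormedSpace.expSeries_div_hasSum_exp lam

lemma hasSum_mul_exp_div (lam : ℝ) :
    HasSum (fun n : ℕ => (n : ℝ) * lam ^ n / (Nat.factorial n : ℝ))
      (lam * Real.exp lam) := by
  have h1 : HasSum (fun n : ℕ => ((n + 1 : ℕ) : ℝ) * lam ^ (n + 1) / (Nat.factorial (n + 1) : ℝ))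
      (lam * Real.exp lam) := by
    have := (hasSum_exp_div lam).mul_left lam
    refine this.congr_fun fun n => ?_
    rw [Nat.factorial_succ]
    push_cast
    rw [pow_succ]
    field_simp
  refine (hasSum_nat_add_iff' (f := fun n : ℕ => (n : ℝ) * lam ^ n / (Nat.factorial n : ℝ))
    1 (g := lam * Real.exp lam)).mp ?_
  simpa using h1

end Aux

theorem stmt_12 (k : ℕ) (hk : 1 ≤ k) (lam : ℝ) (hlam : 0 < lam) :
    HasSum (fun n : ℕ => (n : ℝ) * poissonOrderPmf k n lam)
      ((k : ℝ) * ((k : ℝ) + 1) * lam / 2) := by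
  classical
  set π : (Fin k → ℕ) → ℕ := fun t => ∑ i : Fin k, ((i : ℕ) + 1) * t i with hπ
  set W : (Fin k → ℕ) → ℝ := fun t =>
    Real.exp (-(k * lam)) * (π t : ℝ) * ∏ j : Fin k, lam ^ (t j) / (Nat.factorial (t j) : ℝ)
    with hW
  -- Step A : `W` has sum `k(k+1)λ/2`.
  have expk : (Real.exp lam) ^ k = Real.exp (k * lam) := by
    rw [← Real.exp_nat_mul]
  have hWsum : HasSum W ((k : ℝ) * ((k : ℝ) + 1) * lam / 2) := by
    have hterm : ∀ i : Fin k, HasSum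
        (fun t : Fin k → ℕ => Real.exp (-(k * lam)) * (((i : ℕ) + 1 : ℝ) * (t i : ℝ)) *
          ∏ j : Fin k, lam ^ (t j) / (Nat.factorial (t j) : ℝ))
        (((i : ℕ) + 1 : ℝ) * lam) := by
      intro i
      set a : Fin k → ℕ → ℝ := fun j n =>
        (if j = i then (n : ℝ) else 1) * (lam ^ n / (Nat.factorial n : ℝ)) with ha
      have hann : ∀ j n, 0 ≤ a j n := by
        intro j n
        apply mul_nonneg
        · split <;> positivity
        · positivity
      have hsum : ∀ j, HasSum (a j) ((if j = i then lam else 1) * Real.exp lam) := by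
        intro j
        by_cases hji : j = i
        · simp only [ha, hji, if_true]
          have := hasSum_mul_exp_div lam
          refine this.congr_fun fun n => by rw [mul_div_assoc]
        · simp only [ha, hji, if_false, one_mul]
          exact hasSum_exp_div lam
      have hpi := pi_hasSum_prod k a _ hann hsum
      have hval : (∏ j : Fin k, (if j = i then lam else 1) * Real.exp lam)
          = lam * Real.exp (k * lam) := by
        rw [Finset.prod_mul_distrib, Finset.prod_ite_eq' Finset.univ i (fun _ => lam)]
        simp [expk]
      rw [hval] at hpi
      have := hpi.mul_left (Real.exp (-(k * lam)) * (((i : ℕ) + 1 : ℝ)))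
      have hcancel : Real.exp (-(k * lam)) * (((i : ℕ) + 1 : ℝ)) * (lam * Real.exp (k * lam))
          = ((i : ℕ) + 1 : ℝ) * lam := by
        rw [show Real.exp (-(k * lam)) * (((i : ℕ) + 1 : ℝ)) * (lam * Real.exp (k * lam))
          = (Real.exp (-(k * lam)) * Real.exp (k * lam)) * ((((i : ℕ) + 1 : ℝ)) * lam) by ring,
          ← Real.exp_add]
        simp
      rw [hcancel] at this
      refine this.congr_fun fun t => ?_
      have hp : (∏ x : Fin k, (if x = i then ((t x : ℕ) : ℝ) else 1)) = ((t i : ℕ) : ℝ) := by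
        rw [Finset.prod_ite_eq' Finset.univ i (fun x => ((t x : ℕ) : ℝ))]
        simp
      simp only [ha]
      rw [Finset.prod_mul_distrib, hp]
      ring
    have htot := hasSum_sum (s := (Finset.univ : Finset (Fin k)))
      (fun i _ => hterm i)
    have hvaltot : (∑ i : Fin k, ((i : ℕ) + 1 : ℝ) * lam)
        = (k : ℝ) * ((k : ℝ) + 1) * lam / 2 := by
      have hnat : (∑ i : Fin k, ((i : ℕ) + 1)) * 2 = k * (k + 1) := by
        rw [Fin.sum_univ_eq_sum_range (fun i => i + 1)]
        have h1 := Finset.sum_range_id_mul_two (k + 1)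
        have h2 : ∑ i ∈ Finset.range (k + 1), i = ∑ i ∈ Finset.range k, (i + 1) := by
          rw [Finset.sum_range_succ' (fun i => i) k]
          simp
        have h3 : (k + 1) * (k + 1 - 1) = k * (k + 1) := by
          simp [Nat.mul_comm]
        rw [h2, h3] at h1
        exact h1
      have hreal := congrArg (fun n : ℕ => (n : ℝ)) hnat
      push_cast at hreal
      rw [← Finset.sum_mul]
      linear_combination (lam / 2) * hreal
    rw [hvaltot] at htot
    refine htot.congr_fun fun t => ?_
    simp only [hW, hπ, Nat.cast_sum, Nat.cast_mul, Nat.cast_add, Nat.cast_one]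
    rw [Finset.mul_sum, Finset.sum_mul]
  -- Step B : fiberwise summation.
  have hWnn : ∀ t, 0 ≤ W t := by
    intro t
    apply mul_nonneg (mul_nonneg (Real.exp_nonneg _) (Nat.cast_nonneg _))
    exact Finset.prod_nonneg fun j _ => by positivity
  have hsigma := ((Equiv.sigmaFiberEquiv π).hasSum_iff (f := W)).mpr hWsum
  refine HasSum.sigma hsigma ?_
  intro n
  -- fiber sum
  set S : Finset (Fin k → ℕ) := (Fintype.piFinset fun _ : Fin k => Finset.range (n + 1)) |>.filter
      (fun t => ∑ i : Fin k, ((i : ℕ) + 1) * t i = n) with hS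
  have hmem : ∀ t : Fin k → ℕ, π t = n → t ∈ S := by
    intro t ht
    rw [hS, Finset.mem_filter]
    refine ⟨?_, ht⟩
    rw [Fintype.mem_piFinset]
    intro j
    rw [Finset.mem_range]
    have hle : ((j : ℕ) + 1) * t j ≤ n := ht ▸ Finset.single_le_sum
      (f := fun i : Fin k => ((i : ℕ) + 1) * t i) (fun i _ => Nat.zero_le _) (Finset.mem_univ j)
    calc t j ≤ ((j : ℕ) + 1) * t j := Nat.le_mul_of_pos_left _ (Nat.succ_pos _)
      _ ≤ n := hle
      _ < n + 1 := Nat.lt_succ_self n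
  have hind : HasSum (({t | π t = n} : Set (Fin k → ℕ)).indicator W)
      ((n : ℝ) * poissonOrderPmf k n lam) := by
    have hvanish : ∀ t ∉ S, ({t | π t = n} : Set (Fin k → ℕ)).indicator W t = 0 := by
      intro t htS
      rw [Set.indicator_apply_eq_zero]
      intro ht
      exact absurd (hmem t ht) htS
    have := hasSum_sum_of_ne_finset_zero (L := SummationFilter.unconditional _) (s := S) hvanish
    have hsumeq : (∑ t ∈ S, ({t | π t = n} : Set (Fin k → ℕ)).indicator W t)
        = (n : ℝ) * poissonOrderPmf k n lam := by
      have h1 : ∀ t ∈ S, ({t | π t = n} : Set (Fin k → ℕ)).indicator W t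
          = (n : ℝ) * (Real.exp (-(k * lam)) *
            (lam ^ (∑ i : Fin k, t i) / ∏ i : Fin k, (Nat.factorial (t i) : ℝ))) := by
        intro t htS
        rw [hS, Finset.mem_filter] at htS
        have hπt : π t = n := htS.2
        rw [Set.indicator_of_mem (show t ∈ {t | π t = n} from hπt)]
        simp only [hW, hπt]
        rw [Finset.prod_div_distrib, Finset.prod_pow_eq_pow_sum]
        ring
      rw [Finset.sum_congr rfl h1, ← Finset.mul_sum, ← Finset.mul_sum]
      rw [poissonOrderPmf, poissonOrderH]
    rw [hsumeq] at this
    exact this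
  exact (hasSum_subtype_iff_indicator (s := {t | π t = n})).mpr hind
end
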